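/- arXiv:1812.00386 — 10 statements merged into one kernel-verified Lean document; each statement's English description precedes it below -/
import Mathlib

section
/- Let Λ = (Λ_i)_{i∈ℕ} be a g-frame for H with respect to K with bounds A, B. Assume: (a) for every finite subset F ⊂ ℕ and every choice of vectors g_i ∈ K (i ∈ F), the equality Σ_{i∈F} Λ_i*(g_i) = 0 implies g_i = 0 for all i ∈ F; and (b) for every sequence (g_i)_{i∈ℕ} in K with Σ_{i∈ℕ} ‖g_i‖² < ∞ and Σ_{i∈ℕ} Λ_i*(g_i) = 0, one also has Σ_{i∈ℕ} Λ_{i+1}*(g_i) = 0 (i.e. the kernel of the synthesis operator is invariant under the right-shift). Then there exists a bounded linear operator T : H → H such that Λ_{i+1} = Λ_i ∘ T for all i ∈ ℕ, and ‖T‖ ≤ √(B/A). -/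
open ContinuousLinearMap
open scoped ENNReal

local notation "⟪" x ", " y "⟫" => @inner ℂ _ _ x y

section Aux
variable {H K : Type*} [NormedAddCommGroup H] [InnerProductSpace ℂ H] [CompleteSpace H]
    [NormedAddCommGroup K] [InnerProductSpace ℂ K] [CompleteSpace K]

/-- finite synthesis bound -/
lemma gframe_synth_sq_bound (Φ : ℕ → H →L[ℂ] K) (C : ℝ) (hC : 0 ≤ C)
    (hΦ : ∀ v : H, ∀ t : Finset ℕ, ∑ i ∈ t, ‖Φ i v‖ ^ 2 ≤ C * ‖v‖ ^ 2)
    (g : ℕ → K) (t : Finset ℕ) :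
    ‖∑ i ∈ t, ContinuousLinearMap.adjoint (Φ i) (g i)‖ ^ 2 ≤ C * ∑ i ∈ t, ‖g i‖ ^ 2 := by
  set v := ∑ i ∈ t, ContinuousLinearMap.adjoint (Φ i) (g i) with hv
  have h1 : ‖v‖ ^ 2 = RCLike.re ⟪v, v⟫ := (inner_self_eq_norm_sq (𝕜 := ℂ) v).symm
  have h2 : ⟪v, v⟫ = ∑ i ∈ t, ⟪g i, Φ i v⟫ := by
    rw [hv, sum_inner]
    exact Finset.sum_congr rfl fun i _ => ContinuousLinearMap.adjoint_inner_left _ _ _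
  have h3 : ‖v‖ ^ 2 ≤ ∑ i ∈ t, ‖g i‖ * ‖Φ i v‖ := by
    rw [h1, h2, map_sum]
    refine Finset.sum_le_sum fun i _ => ?_
    calc RCLike.re ⟪g i, Φ i v⟫ ≤ ‖⟪g i, Φ i v⟫‖ := RCLike.re_le_norm _
      _ ≤ ‖g i‖ * ‖Φ i v‖ := norm_inner_le_norm _ _
  have h4 : (∑ i ∈ t, ‖g i‖ * ‖Φ i v‖) ^ 2 ≤
      (∑ i ∈ t, ‖g i‖ ^ 2) * ∑ i ∈ t, ‖Φ i v‖ ^ 2 :=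
    Finset.sum_mul_sq_le_sq_mul_sq t _ _
  have h5 : ∑ i ∈ t, ‖Φ i v‖ ^ 2 ≤ C * ‖v‖ ^ 2 := hΦ v t
  have hg0 : (0:ℝ) ≤ ∑ i ∈ t, ‖g i‖ ^ 2 := Finset.sum_nonneg fun i _ => sq_nonneg _
  rcases eq_or_lt_of_le (norm_nonneg v) with h0 | h0
  · rw [← h0]; simpa using mul_nonneg hC hg0
  · have h6 : (‖v‖ ^ 2) ^ 2 ≤ ((∑ i ∈ t, ‖g i‖ ^ 2) * (C * ‖v‖ ^ 2)) := by
      calc (‖v‖ ^ 2) ^ 2 ≤ (∑ i ∈ t, ‖g i‖ * ‖Φ i v‖) ^ 2 := by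
            apply pow_le_pow_left₀ (by positivity) h3
        _ ≤ (∑ i ∈ t, ‖g i‖ ^ 2) * ∑ i ∈ t, ‖Φ i v‖ ^ 2 := h4
        _ ≤ (∑ i ∈ t, ‖g i‖ ^ 2) * (C * ‖v‖ ^ 2) := by
            apply mul_le_mul_of_nonneg_left h5 hg0
    have hv2 : 0 < ‖v‖ ^ 2 := by positivity
    nlinarith [h6]

lemma gframe_synth_summable (Φ : ℕ → H →L[ℂ] K) (C : ℝ) (hC : 0 ≤ C)
    (hΦ : ∀ v : H, ∀ t : Finset ℕ, ∑ i ∈ t, ‖Φ i v‖ ^ 2 ≤ C * ‖v‖ ^ 2)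
    (g : ℕ → K) (hg : Summable fun i => ‖g i‖ ^ 2) :
    Summable fun i => ContinuousLinearMap.adjoint (Φ i) (g i) := by
  rw [summable_iff_vanishing_norm]
  intro ε hε
  have hg' := summable_iff_vanishing_norm.mp hg (ε ^ 2 / (C + 1)) (by positivity)
  obtain ⟨s, hs⟩ := hg'
  refine ⟨s, fun t ht => ?_⟩
  have h1 := gframe_synth_sq_bound Φ C hC hΦ g t
  have h2 := hs t ht
  have h3 : ∑ i ∈ t, ‖g i‖ ^ 2 < ε ^ 2 / (C + 1) := by
    calc ∑ i ∈ t, ‖g i‖ ^ 2 ≤ ‖∑ i ∈ t, ‖g i‖ ^ 2‖ := le_abs_self _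
      _ < ε ^ 2 / (C + 1) := h2
  have hg0 : (0:ℝ) ≤ ∑ i ∈ t, ‖g i‖ ^ 2 := Finset.sum_nonneg fun i _ => sq_nonneg _
  have : ‖∑ i ∈ t, ContinuousLinearMap.adjoint (Φ i) (g i)‖ ^ 2 < ε ^ 2 := by
    calc ‖∑ i ∈ t, ContinuousLinearMap.adjoint (Φ i) (g i)‖ ^ 2
        ≤ C * ∑ i ∈ t, ‖g i‖ ^ 2 := h1
      _ ≤ (C + 1) * ∑ i ∈ t, ‖g i‖ ^ 2 := by nlinarith
      _ < (C + 1) * (ε ^ 2 / (C + 1)) := by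
          apply mul_lt_mul_of_pos_left h3 (by positivity)
      _ = ε ^ 2 := by field_simp
  calc ‖∑ i ∈ t, ContinuousLinearMap.adjoint (Φ i) (g i)‖
      < ε := lt_of_pow_lt_pow_left₀ 2 hε.le this

end Aux

set_option maxHeartbeats 2000000 in
/-- A g-frame `Λ = (Λ_i)_{i∈ℕ}` for `H` with respect to `K` with bounds `A, B`
such that (a) finite sums `∑_{i∈F} Λ_i* g_i = 0` force all `g_i = 0`, and (b) the kernel of
the synthesis operator is invariant under the right shift, admits a representation
`Λ_{i+1} = Λ_i ∘ T` with `T` bounded and `‖T‖ ≤ √(B/A)`. -/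
theorem gframe_has_representation_of_shift_invariant_kernel
    {H K : Type*} [NormedAddCommGroup H] [InnerProductSpace ℂ H] [CompleteSpace H]
    [TopologicalSpace.SeparableSpace H]
    [NormedAddCommGroup K] [InnerProductSpace ℂ K] [CompleteSpace K]
    [TopologicalSpace.SeparableSpace K]
    (Λ : ℕ → (H →L[ℂ] K)) (A B : ℝ) (hA : 0 < A) (hAB : A ≤ B)
    (hsum : ∀ f : H, Summable fun i : ℕ => ‖Λ i f‖ ^ 2)
    (hlow : ∀ f : H, A * ‖f‖ ^ 2 ≤ ∑' i : ℕ, ‖Λ i f‖ ^ 2)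
    (hup : ∀ f : H, ∑' i : ℕ, ‖Λ i f‖ ^ 2 ≤ B * ‖f‖ ^ 2)
    (hindep : ∀ (F : Finset ℕ) (g : ℕ → K),
      (∑ i ∈ F, ContinuousLinearMap.adjoint (Λ i) (g i)) = 0 → ∀ i ∈ F, g i = 0)
    (hker : ∀ g : ℕ → K, Summable (fun i : ℕ => ‖g i‖ ^ 2) →
      (∑' i : ℕ, ContinuousLinearMap.adjoint (Λ i) (g i)) = 0 →
      (∑' i : ℕ, ContinuousLinearMap.adjoint (Λ (i + 1)) (g i)) = 0) :
    ∃ T : H →L[ℂ] H, ‖T‖ ≤ Real.sqrt (B / A) ∧ ∀ i : ℕ, Λ (i + 1) = (Λ i).comp T := by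
  classical
  have hB : (0:ℝ) < B := lt_of_lt_of_le hA hAB
  have h2r : ∀ x : ℝ, x ^ ((2:ℝ≥0∞).toReal) = x ^ 2 := fun x => by
    rw [show ((2:ℝ≥0∞).toReal) = (2:ℝ) by norm_num, Real.rpow_two]
  -- analysis sequences are in ℓ²
  have hmem : ∀ f : H, Memℓp (fun i => Λ i f) 2 := fun f =>
    memℓp_gen (by simpa only [h2r] using hsum f)
  have hsum' : ∀ f : H, Summable fun i : ℕ => ‖Λ (i+1) f‖ ^ 2 := fun f =>
    (summable_nat_add_iff 1).mpr (hsum f)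
  have hmem' : ∀ f : H, Memℓp (fun i => Λ (i+1) f) 2 := fun f =>
    memℓp_gen (by simpa only [h2r] using hsum' f)
  -- the analysis operator
  let θₗ : H →ₗ[ℂ] lp (fun _ : ℕ => K) 2 :=
    { toFun := fun f => ⟨fun i => Λ i f, hmem f⟩
      map_add' := fun f g => Subtype.ext (funext fun i => map_add (Λ i) f g)
      map_smul' := fun c f => Subtype.ext (funext fun i => map_smul (Λ i) c f) }
  have hθnorm : ∀ f : H, ‖θₗ f‖ ^ 2 = ∑' i, ‖Λ i f‖ ^ 2 := fun f => by
    have := lp.norm_rpow_eq_tsum (p := 2) (by norm_num) (θₗ f)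
    simp only [h2r] at this; exact this
  have hθle : ∀ f : H, ‖θₗ f‖ ≤ Real.sqrt B * ‖f‖ := fun f => by
    have h1 : ‖θₗ f‖ ^ 2 ≤ B * ‖f‖ ^ 2 := by rw [hθnorm]; exact hup f
    calc ‖θₗ f‖ = Real.sqrt (‖θₗ f‖ ^ 2) := (Real.sqrt_sq (norm_nonneg _)).symm
      _ ≤ Real.sqrt (B * ‖f‖ ^ 2) := Real.sqrt_le_sqrt h1
      _ = Real.sqrt B * ‖f‖ := by
          rw [Real.sqrt_mul hB.le, Real.sqrt_sq (norm_nonneg _)]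
  let θ : H →L[ℂ] lp (fun _ : ℕ => K) 2 := θₗ.mkContinuous (Real.sqrt B) hθle
  have hθlow : ∀ f : H, ‖f‖ ≤ (Real.sqrt A)⁻¹ * ‖θ f‖ := fun f => by
    have h1 : A * ‖f‖ ^ 2 ≤ ‖θ f‖ ^ 2 := by
      rw [show ‖θ f‖ = ‖θₗ f‖ from rfl, hθnorm]; exact hlow f
    have h2 : Real.sqrt A * ‖f‖ ≤ ‖θ f‖ := by
      calc Real.sqrt A * ‖f‖ = Real.sqrt (A * ‖f‖ ^ 2) := by
            rw [Real.sqrt_mul hA.le, Real.sqrt_sq (norm_nonneg _)]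
        _ ≤ Real.sqrt (‖θ f‖ ^ 2) := Real.sqrt_le_sqrt h1
        _ = ‖θ f‖ := Real.sqrt_sq (norm_nonneg _)
    have hApos : (0:ℝ) < Real.sqrt A := Real.sqrt_pos.mpr hA
    rw [inv_mul_eq_div, le_div_iff₀ hApos, mul_comm]
    exact h2
  have hanti : AntilipschitzWith ⟨(Real.sqrt A)⁻¹, by positivity⟩ θ :=
    θ.antilipschitz_of_bound (fun f => hθlow f)
  have hinj : Function.Injective θ := hanti.injective
  have hclosed : IsClosed (Set.range θ) := hanti.isClosed_range θ.uniformContinuous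
  set M : Submodule ℂ (lp (fun _ : ℕ => K) 2) := LinearMap.range (θ : H →ₗ[ℂ] lp (fun _ : ℕ => K) 2) with hM
  haveI : CompleteSpace M := IsClosed.completeSpace_coe (hs := by
    rw [hM, LinearMap.coe_range]; exact hclosed)
  -- the shifted analysis sequence
  let sh : H → lp (fun _ : ℕ => K) 2 := fun f => ⟨fun i => Λ (i+1) f, hmem' f⟩
  -- finite upper bounds for the two operator families
  have hΛbd : ∀ v : H, ∀ t : Finset ℕ, ∑ i ∈ t, ‖Λ i v‖ ^ 2 ≤ B * ‖v‖ ^ 2 := fun v t =>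
    le_trans ((hsum v).sum_le_tsum t (fun i _ => sq_nonneg _)) (hup v)
  have hΛbd' : ∀ v : H, ∀ t : Finset ℕ, ∑ i ∈ t, ‖Λ (i+1) v‖ ^ 2 ≤ B * ‖v‖ ^ 2 := fun v t => by
    have h1 : ∑ i ∈ t, ‖Λ (i+1) v‖ ^ 2 = ∑ j ∈ t.image (· + 1), ‖Λ j v‖ ^ 2 := by
      rw [Finset.sum_image (by intro a _ b _ h; simp only at h; omega)]
    rw [h1]; exact hΛbd v _
  -- the shifted sequence is in the range of θ
  have hmemM : ∀ f : H, sh f ∈ M := by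
    intro f
    rw [← Submodule.orthogonal_orthogonal M, Submodule.mem_orthogonal]
    intro g hg
    have hgsum : Summable fun i => ‖g i‖ ^ 2 := by
      simpa only [h2r] using (lp.memℓp g).summable (by norm_num)
    have hS1 : Summable fun i => ContinuousLinearMap.adjoint (Λ i) (g i) :=
      gframe_synth_summable Λ B hB.le hΛbd g hgsum
    have hS2 : Summable fun i => ContinuousLinearMap.adjoint (Λ (i+1)) (g i) :=
      gframe_synth_summable (fun i => Λ (i+1)) B hB.le hΛbd' g hgsum
    -- the synthesis of g vanishes
    have hs0 : (∑' i, ContinuousLinearMap.adjoint (Λ i) (g i)) = 0 := by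
      refine ext_inner_left ℂ fun h => ?_
      rw [inner_zero_right]
      have h1 : HasSum (fun i => ⟪h, ContinuousLinearMap.adjoint (Λ i) (g i)⟫)
          ⟪h, ∑' i, ContinuousLinearMap.adjoint (Λ i) (g i)⟫ :=
        (innerSL ℂ h).hasSum hS1.hasSum
      have h2 : HasSum (fun i => ⟪(θₗ h : ∀ _, K) i, g i⟫) ⟪θₗ h, g⟫ :=
        lp.hasSum_inner (𝕜 := ℂ) (θₗ h) g
      have h3 : (fun i => ⟪h, ContinuousLinearMap.adjoint (Λ i) (g i)⟫) =
          fun i => ⟪(θₗ h : ∀ _, K) i, g i⟫ := by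
        funext i
        exact ContinuousLinearMap.adjoint_inner_right (Λ i) h (g i)
      rw [h3] at h1
      have h4 : ⟪h, ∑' i, ContinuousLinearMap.adjoint (Λ i) (g i)⟫ = ⟪(θₗ h : lp _ 2), g⟫ :=
        h1.unique h2
      rw [h4]
      exact Submodule.inner_right_of_mem_orthogonal (LinearMap.mem_range.mpr ⟨h, rfl⟩) hg
    have hs1 := hker g hgsum hs0
    -- conclude the orthogonality with sh f
    have h5 : HasSum (fun i => ⟪(g : ∀ _, K) i, (sh f : ∀ _, K) i⟫) ⟪g, sh f⟫ :=
      lp.hasSum_inner (𝕜 := ℂ) g (sh f)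
    have h6 : HasSum (fun i => ⟪f, ContinuousLinearMap.adjoint (Λ (i+1)) (g i)⟫) 0 := by
      have := (innerSL ℂ f).hasSum hS2.hasSum
      rwa [hs1, map_zero] at this
    have h7 : HasSum (fun i => ⟪(g : ∀ _, K) i, (sh f : ∀ _, K) i⟫) 0 := by
      have h8 := h6.star
      simp only [Function.comp] at h8
      have h9 : (fun i => star ⟪f, ContinuousLinearMap.adjoint (Λ (i+1)) (g i)⟫) =
          fun i => ⟪(g : ∀ _, K) i, (sh f : ∀ _, K) i⟫ := by
        funext i
        rw [show (star ⟪f, ContinuousLinearMap.adjoint (Λ (i+1)) (g i)⟫ : ℂ) =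
            ⟪ContinuousLinearMap.adjoint (Λ (i+1)) (g i), f⟫ from inner_conj_symm _ _,
          ContinuousLinearMap.adjoint_inner_left]
      rw [h9] at h8
      simpa using h8
    exact h5.unique h7
  -- choose preimages
  have hex : ∀ f : H, ∃ h : H, θ h = sh f := fun f => LinearMap.mem_range.mp (hmemM f)
  let T0 : H → H := fun f => (hex f).choose
  have hT0 : ∀ f : H, θ (T0 f) = sh f := fun f => (hex f).choose_spec
  have hshadd : ∀ f g : H, sh (f + g) = sh f + sh g := fun f g =>
    Subtype.ext (funext fun i => map_add (Λ (i+1)) f g)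
  have hshsmul : ∀ (c : ℂ) (f : H), sh (c • f) = c • sh f := fun c f =>
    Subtype.ext (funext fun i => map_smul (Λ (i+1)) c f)
  let Tₗ : H →ₗ[ℂ] H :=
    { toFun := T0
      map_add' := fun f g => hinj (by rw [map_add, hT0, hT0, hT0, hshadd])
      map_smul' := fun c f => hinj (by rw [map_smul, hT0, hT0, RingHom.id_apply, hshsmul]) }
  have hshnorm : ∀ f : H, ‖sh f‖ ^ 2 = ∑' i, ‖Λ (i+1) f‖ ^ 2 := fun f => by
    have := lp.norm_rpow_eq_tsum (p := 2) (by norm_num) (sh f)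
    simp only [h2r] at this; exact this
  have hbnd : ∀ f : H, ‖Tₗ f‖ ≤ Real.sqrt (B / A) * ‖f‖ := by
    intro f
    have e1 : A * ‖T0 f‖ ^ 2 ≤ ∑' i, ‖Λ i (T0 f)‖ ^ 2 := hlow (T0 f)
    have e2 : (∑' i, ‖Λ i (T0 f)‖ ^ 2) = ‖sh f‖ ^ 2 := by
      rw [← hθnorm (T0 f)]
      exact congrArg (· ^ 2) (congrArg norm (hT0 f))
    have e3 : (∑' i, ‖Λ (i+1) f‖ ^ 2) ≤ ∑' i, ‖Λ i f‖ ^ 2 :=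
      (hsum' f).tsum_le_tsum_of_inj (fun i => i + 1) (add_left_injective 1)
        (fun c _ => sq_nonneg _) (fun i => le_rfl) (hsum f)
    have e4 : A * ‖T0 f‖ ^ 2 ≤ B * ‖f‖ ^ 2 := by
      calc A * ‖T0 f‖ ^ 2 ≤ ‖sh f‖ ^ 2 := e2 ▸ e1
        _ = ∑' i, ‖Λ (i+1) f‖ ^ 2 := hshnorm f
        _ ≤ ∑' i, ‖Λ i f‖ ^ 2 := e3
        _ ≤ B * ‖f‖ ^ 2 := hup f
    have e5 : ‖T0 f‖ ^ 2 ≤ (B / A) * ‖f‖ ^ 2 := by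
      rw [div_mul_eq_mul_div, le_div_iff₀ hA]
      nlinarith [e4]
    calc ‖T0 f‖ = Real.sqrt (‖T0 f‖ ^ 2) := (Real.sqrt_sq (norm_nonneg _)).symm
      _ ≤ Real.sqrt ((B / A) * ‖f‖ ^ 2) := Real.sqrt_le_sqrt e5
      _ = Real.sqrt (B / A) * ‖f‖ := by
          rw [Real.sqrt_mul (by positivity), Real.sqrt_sq (norm_nonneg _)]
  refine ⟨Tₗ.mkContinuous (Real.sqrt (B / A)) hbnd,
    Tₗ.mkContinuous_norm_le (Real.sqrt_nonneg _) hbnd, ?_⟩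
  intro i
  ext f
  have h1 : θ (T0 f) = sh f := hT0 f
  have h2 : Λ i (T0 f) = Λ (i+1) f :=
    congrFun (congrArg Subtype.val h1) i
  exact h2.symm
end

section
/- Every g-orthonormal basis (Λ_i)_{i∈ℕ} for H with respect to K admits a representation: there exists a bounded linear operator T : H → H with ‖T‖ ≤ 1 such that Λ_{i+1} = Λ_i ∘ T for all i ∈ ℕ. -/
open ContinuousLinearMap

/-- Every g-orthonormal basis `(Λ_i)_{i∈ℕ}` for `H` with respect to `K` admits a
representation by a bounded operator `T : H → H` with `‖T‖ ≤ 1`, i.e. `Λ_{i+1} = Λ_i ∘ T`. -/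
theorem gOrthonormalBasis_has_representation
    {H K : Type*} [NormedAddCommGroup H] [InnerProductSpace ℂ H] [CompleteSpace H]
    [TopologicalSpace.SeparableSpace H]
    [NormedAddCommGroup K] [InnerProductSpace ℂ K] [CompleteSpace K]
    [TopologicalSpace.SeparableSpace K]
    (Λ : ℕ → (H →L[ℂ] K))
    (horth : ∀ (i j : ℕ) (g h : K),
      (inner ℂ (ContinuousLinearMap.adjoint (Λ i) g) (ContinuousLinearMap.adjoint (Λ j) h) : ℂ) =
        if i = j then (inner ℂ g h : ℂ) else 0)
    (hsum : ∀ f : H, Summable fun i : ℕ => ‖Λ i f‖ ^ 2)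
    (hparseval : ∀ f : H, ∑' i : ℕ, ‖Λ i f‖ ^ 2 = ‖f‖ ^ 2) :
    ∃ T : H →L[ℂ] H, ‖T‖ ≤ 1 ∧ ∀ i : ℕ, Λ (i + 1) = (Λ i).comp T := by
  classical
  -- adjoints are isometries
  have hadj_norm : ∀ (i : ℕ) (g : K), ‖(ContinuousLinearMap.adjoint (Λ i)) g‖ = ‖g‖ := by
    intro i g
    have h := horth i i g g
    rw [if_pos rfl, inner_self_eq_norm_sq_to_K, inner_self_eq_norm_sq_to_K] at h
    have h2 : (‖(ContinuousLinearMap.adjoint (Λ i)) g‖ : ℝ) ^ 2 = (‖g‖ : ℝ) ^ 2 := by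
      exact_mod_cast h
    nlinarith [norm_nonneg ((ContinuousLinearMap.adjoint (Λ i)) g), norm_nonneg g]
  -- delta relation
  have hdelta : ∀ (i j : ℕ) (g : K),
      (Λ i) ((ContinuousLinearMap.adjoint (Λ j)) g) = if i = j then g else 0 := by
    intro i j g
    apply ext_inner_left ℂ
    intro h
    rw [← ContinuousLinearMap.adjoint_inner_left, horth i j h g]
    split_ifs <;> simp
  -- the orthogonal family of isometries
  set V : ℕ → (K →ₗᵢ[ℂ] H) := fun i =>
    { toLinearMap := (ContinuousLinearMap.adjoint (Λ i) : K →ₗ[ℂ] H)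
      norm_map' := hadj_norm i } with hVdef
  have hV : OrthogonalFamily ℂ (fun _ : ℕ => K) V := by
    intro i j hij g h
    simpa [hVdef, hij] using horth i j g h
  have hs : ∀ f : H, Summable fun i : ℕ => (V i) (Λ (i + 1) f) := by
    intro f
    rw [hV.summable_iff_norm_sq_summable]
    exact (hsum f).comp_injective (add_left_injective 1)
  -- the linear map
  set Tlin : H →ₗ[ℂ] H :=
    { toFun := fun f => ∑' i : ℕ, (V i) (Λ (i + 1) f)
      map_add' := by
        intro x y
        rw [← Summable.tsum_add (hs x) (hs y)]
        exact tsum_congr fun i => by simp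
      map_smul' := by
        intro c x
        rw [RingHom.id_apply, ← Summable.tsum_const_smul c (hs x)]
        exact tsum_congr fun i => by simp } with hTdef
  -- norm identity for the sum
  have hnormsq : ∀ f : H, HasSum (fun i : ℕ => ‖Λ (i + 1) f‖ ^ 2) (‖Tlin f‖ ^ 2) := by
    intro f
    have hS := (hs f).hasSum
    have h2 : Filter.Tendsto (fun s : Finset ℕ => ‖∑ i ∈ s, (V i) (Λ (i + 1) f)‖ ^ 2)
        Filter.atTop (nhds (‖Tlin f‖ ^ 2)) :=
      (((continuous_pow 2).comp continuous_norm).tendsto _).comp hS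
    exact (Filter.Tendsto.congr (fun s => hV.norm_sum (fun i => Λ (i + 1) f) s) h2)
  have hbound : ∀ f : H, ‖Tlin f‖ ≤ 1 * ‖f‖ := by
    intro f
    rw [one_mul]
    have h1 : ‖Tlin f‖ ^ 2 = ∑' i : ℕ, ‖Λ (i + 1) f‖ ^ 2 := ((hnormsq f).tsum_eq).symm
    have h2 : ∑' i : ℕ, ‖Λ (i + 1) f‖ ^ 2 ≤ ∑' i : ℕ, ‖Λ i f‖ ^ 2 :=
      Summable.tsum_le_tsum_of_inj (fun i => i + 1) (add_left_injective 1)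
        (fun c _ => by positivity) (fun i => le_rfl)
        ((hsum f).comp_injective (add_left_injective 1)) (hsum f)
    have h3 : ‖Tlin f‖ ^ 2 ≤ ‖f‖ ^ 2 := by rw [h1, ← hparseval f]; exact h2
    nlinarith [norm_nonneg (Tlin f), norm_nonneg f]
  refine ⟨Tlin.mkContinuous 1 hbound, Tlin.mkContinuous_norm_le zero_le_one hbound, ?_⟩
  intro i
  ext f
  have hTf : Tlin.mkContinuous 1 hbound f = ∑' j : ℕ, (V j) (Λ (j + 1) f) := rfl
  simp only [ContinuousLinearMap.comp_apply, hTf]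
  rw [ContinuousLinearMap.map_tsum _ (hs f)]
  have : ∀ j : ℕ, (Λ i) ((V j) (Λ (j + 1) f)) = if i = j then Λ (j + 1) f else 0 := by
    intro j
    exact hdelta i j _
  rw [tsum_congr this, tsum_eq_single i (fun j hj => if_neg fun h => hj h.symm), if_pos rfl]
end

section
/- Let Λ = (Λ_i)_{i∈ℕ} be a g-frame for H with respect to K with bounds A, B that is represented by a bounded operator T : H → H, and let S : H → H be a bounded invertible operator with bounded inverse. Then the family (Λ_i ∘ S)_{i∈ℕ} is a g-frame for H with respect to K with bounds A·‖S⁻¹‖⁻² and B·‖S‖², and it is represented by the bounded operator S⁻¹ ∘ T ∘ S, i.e. Λ_{i+1} ∘ S = (Λ_i ∘ S) ∘ (S⁻¹ T S) for all i ∈ ℕ. -/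
open ContinuousLinearMap

/-- If a g-frame `Λ` with bounds `A, B` is represented by a bounded `T`, and
`S ∈ GL(H)`, then `(Λ_i ∘ S)` is a g-frame with bounds `A·‖S⁻¹‖⁻²` and `B·‖S‖²`, represented
by `S⁻¹ ∘ T ∘ S`. -/
theorem gframe_comp_invertible_representation
    {H K : Type*} [NormedAddCommGroup H] [InnerProductSpace ℂ H] [CompleteSpace H]
    [TopologicalSpace.SeparableSpace H]
    [NormedAddCommGroup K] [InnerProductSpace ℂ K] [CompleteSpace K]
    [TopologicalSpace.SeparableSpace K]
    (Λ : ℕ → (H →L[ℂ] K)) (A B : ℝ) (hA : 0 < A) (hAB : A ≤ B)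
    (hsum : ∀ f : H, Summable fun i : ℕ => ‖Λ i f‖ ^ 2)
    (hlow : ∀ f : H, A * ‖f‖ ^ 2 ≤ ∑' i : ℕ, ‖Λ i f‖ ^ 2)
    (hup : ∀ f : H, ∑' i : ℕ, ‖Λ i f‖ ^ 2 ≤ B * ‖f‖ ^ 2)
    (T : H →L[ℂ] H) (hrep : ∀ i : ℕ, Λ (i + 1) = (Λ i).comp T)
    (S : H ≃L[ℂ] H) :
    (∀ f : H, Summable fun i : ℕ => ‖(Λ i).comp (S : H →L[ℂ] H) f‖ ^ 2) ∧
    (∀ f : H, A * (‖(S.symm : H →L[ℂ] H)‖ ^ 2)⁻¹ * ‖f‖ ^ 2 ≤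
      ∑' i : ℕ, ‖(Λ i).comp (S : H →L[ℂ] H) f‖ ^ 2) ∧
    (∀ f : H, ∑' i : ℕ, ‖(Λ i).comp (S : H →L[ℂ] H) f‖ ^ 2 ≤
      B * ‖(S : H →L[ℂ] H)‖ ^ 2 * ‖f‖ ^ 2) ∧
    (∀ i : ℕ, (Λ (i + 1)).comp (S : H →L[ℂ] H) =
      ((Λ i).comp (S : H →L[ℂ] H)).comp
        (((S.symm : H →L[ℂ] H).comp T).comp (S : H →L[ℂ] H))) := by
  refine ⟨fun f => hsum (S f), fun f => ?_, fun f => ?_, fun i => ?_⟩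
  · have h1 : ‖f‖ ^ 2 ≤ ‖(S.symm : H →L[ℂ] H)‖ ^ 2 * ‖S f‖ ^ 2 := by
      have : ‖f‖ ≤ ‖(S.symm : H →L[ℂ] H)‖ * ‖S f‖ := by
        calc ‖f‖ = ‖(S.symm : H →L[ℂ] H) (S f)‖ := by simp
        _ ≤ ‖(S.symm : H →L[ℂ] H)‖ * ‖S f‖ := le_opNorm _ _
      calc ‖f‖ ^ 2 ≤ (‖(S.symm : H →L[ℂ] H)‖ * ‖S f‖) ^ 2 := by
            exact pow_le_pow_left₀ (norm_nonneg _) this 2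
        _ = _ := by ring
    have h2 : A * (‖(S.symm : H →L[ℂ] H)‖ ^ 2)⁻¹ * ‖f‖ ^ 2 ≤ A * ‖S f‖ ^ 2 := by
      rcases eq_or_lt_of_le (norm_nonneg (S.symm : H →L[ℂ] H)) with h | h
      · simp [← h]
        positivity
      · rw [mul_assoc, mul_le_mul_iff_right₀ hA, inv_mul_le_iff₀ (by positivity)]
        linarith [h1]
    calc A * (‖(S.symm : H →L[ℂ] H)‖ ^ 2)⁻¹ * ‖f‖ ^ 2 ≤ A * ‖S f‖ ^ 2 := h2
      _ ≤ ∑' i : ℕ, ‖Λ i (S f)‖ ^ 2 := hlow (S f)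
      _ = _ := by simp [ContinuousLinearMap.comp_apply]
  · calc (∑' i : ℕ, ‖(Λ i).comp (S : H →L[ℂ] H) f‖ ^ 2)
        = ∑' i : ℕ, ‖Λ i (S f)‖ ^ 2 := by simp [ContinuousLinearMap.comp_apply]
      _ ≤ B * ‖S f‖ ^ 2 := hup (S f)
      _ ≤ B * ‖(S : H →L[ℂ] H)‖ ^ 2 * ‖f‖ ^ 2 := by
          have h := le_opNorm (S : H →L[ℂ] H) f
          have : ‖S f‖ ^ 2 ≤ (‖(S : H →L[ℂ] H)‖ * ‖f‖) ^ 2 :=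
            pow_le_pow_left₀ (norm_nonneg _) h 2
          nlinarith [hA.le.trans hAB]
  · ext x
    simp [ContinuousLinearMap.comp_apply, hrep i]
end

section
/- Every g-Riesz basis (Λ_i)_{i∈ℕ} for H with respect to K admits a representation: there exists a bounded linear operator T : H → H such that Λ_{i+1} = Λ_i ∘ T for all i ∈ ℕ. -/
set_option maxHeartbeats 1000000


open ContinuousLinearMap

/-- Every g-Riesz basis `(Λ_i)_{i∈ℕ}` for `H` with respect to `K` admits a
representation: there is a bounded `T : H → H` with `Λ_{i+1} = Λ_i ∘ T` for all `i`. -/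
theorem gRieszBasis_has_representation
    {H K : Type*} [NormedAddCommGroup H] [InnerProductSpace ℂ H] [CompleteSpace H]
    [TopologicalSpace.SeparableSpace H]
    [NormedAddCommGroup K] [InnerProductSpace ℂ K] [CompleteSpace K]
    [TopologicalSpace.SeparableSpace K]
    (Λ : ℕ → (H →L[ℂ] K)) (A B : ℝ) (hA : 0 < A) (hAB : A ≤ B)
    (hcomplete : ∀ f : H, (∀ i : ℕ, Λ i f = 0) → f = 0)
    (hriesz : ∀ (F : Finset ℕ) (g : ℕ → K),
      A * ∑ i ∈ F, ‖g i‖ ^ 2 ≤ ‖∑ i ∈ F, ContinuousLinearMap.adjoint (Λ i) (g i)‖ ^ 2 ∧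
      ‖∑ i ∈ F, ContinuousLinearMap.adjoint (Λ i) (g i)‖ ^ 2 ≤ B * ∑ i ∈ F, ‖g i‖ ^ 2) :
    ∃ T : H →L[ℂ] H, ∀ i : ℕ, Λ (i + 1) = (Λ i).comp T := by
  classical
  set U0 : (ℕ →₀ K) →ₗ[ℂ] H :=
    Finsupp.lsum ℂ (fun i => (ContinuousLinearMap.adjoint (Λ i) : K →ₗ[ℂ] H)) with hU0def
  set U1 : (ℕ →₀ K) →ₗ[ℂ] H :=
    Finsupp.lsum ℂ (fun i => (ContinuousLinearMap.adjoint (Λ (i + 1)) : K →ₗ[ℂ] H)) with hU1def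
  have hU0apply : ∀ g : ℕ →₀ K,
      U0 g = ∑ i ∈ g.support, ContinuousLinearMap.adjoint (Λ i) (g i) := fun g => rfl
  have hU1apply : ∀ g : ℕ →₀ K,
      U1 g = ∑ i ∈ g.support, ContinuousLinearMap.adjoint (Λ (i + 1)) (g i) := fun g => rfl
  -- the two basic norm estimates
  have hlow : ∀ g : ℕ →₀ K, A * ∑ i ∈ g.support, ‖g i‖ ^ 2 ≤ ‖U0 g‖ ^ 2 := by
    intro g
    rw [hU0apply]
    exact (hriesz g.support g).1
  have hup : ∀ g : ℕ →₀ K, ‖U1 g‖ ^ 2 ≤ B * ∑ i ∈ g.support, ‖g i‖ ^ 2 := by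
    intro g
    have h := (hriesz (g.support.image (· + 1)) (fun j => g (j - 1))).2
    rw [Finset.sum_image (fun a _ b _ h => by omega),
        Finset.sum_image (fun a _ b _ h => by omega)] at h
    simp only [Nat.add_sub_cancel] at h
    rw [hU1apply]
    exact h
  -- injectivity of `U0`
  have hinj : Function.Injective U0 := by
    rw [injective_iff_map_eq_zero]
    intro g hg
    have h := hlow g
    rw [hg, norm_zero] at h
    have hS0 : (0:ℝ) ≤ ∑ i ∈ g.support, ‖g i‖ ^ 2 :=
      Finset.sum_nonneg fun i _ => by positivity
    have hSeq : ∑ i ∈ g.support, ‖g i‖ ^ 2 = 0 := by nlinarith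
    have hall := (Finset.sum_eq_zero_iff_of_nonneg fun i _ => by positivity).1 hSeq
    ext i
    by_cases hi : i ∈ g.support
    · have := hall i hi
      have : ‖g i‖ = 0 := by nlinarith [norm_nonneg (g i)]
      simpa using norm_eq_zero.1 this
    · simpa using Finsupp.notMem_support_iff.1 hi
  -- the norm bound for `U1` in terms of `U0`
  have hBA : (0:ℝ) ≤ B / A := div_nonneg (le_trans hA.le hAB) hA.le
  have hbound : ∀ g : ℕ →₀ K, ‖U1 g‖ ≤ Real.sqrt (B / A) * ‖U0 g‖ := by
    intro g
    have h3 : ‖U1 g‖ ^ 2 ≤ (B / A) * ‖U0 g‖ ^ 2 := by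
      have h1 := hlow g
      have h2 := hup g
      have heq : B * ∑ i ∈ g.support, ‖g i‖ ^ 2
          = (B / A) * (A * ∑ i ∈ g.support, ‖g i‖ ^ 2) := by
        field_simp
      calc ‖U1 g‖ ^ 2 ≤ B * ∑ i ∈ g.support, ‖g i‖ ^ 2 := h2
        _ = (B / A) * (A * ∑ i ∈ g.support, ‖g i‖ ^ 2) := heq
        _ ≤ (B / A) * ‖U0 g‖ ^ 2 := mul_le_mul_of_nonneg_left h1 hBA
    have h4 := Real.sqrt_le_sqrt h3
    rwa [Real.sqrt_sq (norm_nonneg _), Real.sqrt_mul hBA,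
      Real.sqrt_sq (norm_nonneg _)] at h4
  -- the dense subspace
  set M : Submodule ℂ H := LinearMap.range U0 with hMdef
  have hmemM : ∀ (i : ℕ) (k : K), ContinuousLinearMap.adjoint (Λ i) k ∈ M := by
    intro i k
    exact ⟨Finsupp.single i k, Finsupp.lsum_single _ _ _ _⟩
  let e : (ℕ →₀ K) ≃ₗ[ℂ] M := LinearEquiv.ofInjective U0 hinj
  have hsymm : ∀ x : M, U0 (e.symm x) = (x : H) := by
    intro x
    conv_rhs => rw [← e.apply_symm_apply x]
    exact (LinearEquiv.ofInjective_apply U0 (e.symm x)).symm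
  -- the operator on M
  let Slin : M →ₗ[ℂ] H := U1 ∘ₗ (e.symm : M ≃ₗ[ℂ] (ℕ →₀ K)).toLinearMap
  have hSlinBound : ∀ x : M, ‖Slin x‖ ≤ Real.sqrt (B / A) * ‖x‖ := by
    intro x
    have : Slin x = U1 (e.symm x) := rfl
    rw [this]
    calc ‖U1 (e.symm x)‖ ≤ Real.sqrt (B / A) * ‖U0 (e.symm x)‖ := hbound _
      _ = Real.sqrt (B / A) * ‖x‖ := by rw [hsymm]; rfl
  let Scl : M →L[ℂ] H := Slin.mkContinuous (Real.sqrt (B / A)) hSlinBound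
  -- density of M
  have hMdense : Dense (M : Set H) := by
    rw [Submodule.dense_iff_topologicalClosure_eq_top,
      Submodule.topologicalClosure_eq_top_iff, Submodule.eq_bot_iff]
    intro f hf
    apply hcomplete
    intro i
    have h0 := (Submodule.mem_orthogonal M f).1 hf _ (hmemM i (Λ i f))
    rw [ContinuousLinearMap.adjoint_inner_left] at h0
    exact inner_self_eq_zero.1 h0
  have hdenseR : DenseRange (M.subtypeL : M →L[ℂ] H) := hMdense.denseRange_val
  have huni : IsUniformInducing (M.subtypeL : M →L[ℂ] H) :=
    isUniformEmbedding_subtype_val.toIsUniformInducing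
  -- the extension
  let S : H →L[ℂ] H := Scl.extend M.subtypeL
  have hSkey : ∀ (i : ℕ) (k : K),
      S (ContinuousLinearMap.adjoint (Λ i) k) = ContinuousLinearMap.adjoint (Λ (i + 1)) k := by
    intro i k
    have hmem := hmemM i k
    have h1 : S (M.subtypeL ⟨_, hmem⟩) = Scl ⟨_, hmem⟩ :=
      ContinuousLinearMap.extend_eq _ hdenseR huni _
    have h2 : Scl ⟨ContinuousLinearMap.adjoint (Λ i) k, hmem⟩ = U1 (Finsupp.single i k) := by
      show U1 (e.symm ⟨ContinuousLinearMap.adjoint (Λ i) k, hmem⟩) = U1 (Finsupp.single i k)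
      congr 1
      apply hinj
      rw [hsymm, Finsupp.lsum_single]
      rfl
    have h3 : U1 (Finsupp.single i k) = ContinuousLinearMap.adjoint (Λ (i + 1)) k :=
      Finsupp.lsum_single _ _ _ _
    calc S (ContinuousLinearMap.adjoint (Λ i) k)
        = S (M.subtypeL ⟨_, hmem⟩) := rfl
      _ = Scl ⟨_, hmem⟩ := h1
      _ = U1 (Finsupp.single i k) := h2
      _ = ContinuousLinearMap.adjoint (Λ (i + 1)) k := h3
  refine ⟨ContinuousLinearMap.adjoint S, fun i => ?_⟩
  ext f
  apply ext_inner_right ℂ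
  intro k
  rw [ContinuousLinearMap.comp_apply]
  rw [← ContinuousLinearMap.adjoint_inner_right (Λ (i + 1)) f k, ← hSkey i k,
    ← ContinuousLinearMap.adjoint_inner_left S,
    ContinuousLinearMap.adjoint_inner_right (Λ i)]
end

section
/- Let (K_i)_{i∈I} be a family of complex separable Hilbert spaces indexed by a countable set I, and let Λ = (Λ_i)_{i∈I} be a family of bounded linear operators Λ_i : H → K_i. Then Λ is a g-Riesz basis for H if and only if there exist a g-orthonormal basis (Θ_i)_{i∈I} for H (with Θ_i : H → K_i) and a bounded invertible operator U : H → H with bounded inverse such that Λ_i = Θ_i ∘ U for all i ∈ I. -/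
open ContinuousLinearMap
open scoped ENNReal NNReal ComplexConjugate

noncomputable section



/-- squared-norm formula in `lp _ 2` with nat power. -/
lemma lp_norm_sq_eq_tsum {ι : Type*} (K : ι → Type*) [∀ i, NormedAddCommGroup (K i)]
    (x : lp K 2) : ‖x‖ ^ 2 = ∑' i, ‖x i‖ ^ 2 := by
  have h := lp.norm_rpow_eq_tsum (p := 2) (by norm_num) x
  have h2 : (2 : ℝ≥0∞).toReal = (2 : ℝ) := by norm_num
  rw [h2] at h
  calc ‖x‖ ^ 2 = ‖x‖ ^ (2 : ℝ) := by rw [Real.rpow_two]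
    _ = ∑' i, ‖x i‖ ^ (2 : ℝ) := h
    _ = ∑' i, ‖x i‖ ^ 2 := by
        congr 1; ext i; rw [Real.rpow_two]

/-- a 1-separated set in a separable metric space is countable -/
lemma countable_of_one_le_dist {X : Type*} [MetricSpace X] [TopologicalSpace.SeparableSpace X]
    {s : Set X} (h : ∀ x ∈ s, ∀ y ∈ s, x ≠ y → 1 ≤ dist x y) : s.Countable := by
  obtain ⟨D, hDc, hDd⟩ := TopologicalSpace.exists_countable_dense X
  have hch : ∀ x : s, ∃ d ∈ D, dist (x : X) d < 1/2 := by
    intro x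
    obtain ⟨d, hd, hdd⟩ := Metric.dense_iff.mp hDd (x : X) (1/2) (by norm_num)
    exact ⟨d, hdd, by simpa [dist_comm] using Metric.mem_ball.mp hd⟩
  choose f hfD hfd using hch
  have hinj : Function.Injective f := by
    intro x y hxy
    by_contra hne
    have hne' : (x : X) ≠ (y : X) := fun hc => hne (Subtype.ext hc)
    have h1 : (1:ℝ) ≤ dist (x : X) (y : X) := h x x.2 y y.2 hne'
    have := dist_triangle (x : X) (f x) (y : X)
    have h3 : dist (f x) (y : X) = dist (y : X) (f y) := by rw [hxy, dist_comm]
    have := hfd x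
    have := hfd y
    linarith [dist_triangle (x : X) (f x) (y : X), hfd x, hfd y,
      (by rw [hxy, dist_comm] : dist (f x) (y : X) = dist (y:X) (f y))]
  have : Countable s := by
    have hDcount : Countable D := hDc.to_subtype
    exact Function.Injective.countable (f := fun x : s => (⟨f x, hfD x⟩ : D))
      (fun a b hab => hinj (congrArg Subtype.val hab))
  exact Set.countable_coe_iff.mp this


/-- an orthonormal set in a separable space is countable -/
lemma orthonormal_set_countable {X : Type*} [NormedAddCommGroup X] [InnerProductSpace ℂ X]
    [TopologicalSpace.SeparableSpace X] {s : Set X}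
    (hs : Orthonormal ℂ ((↑) : s → X)) : s.Countable := by
  apply countable_of_one_le_dist
  intro x hx y hy hxy
  have hips : (inner ℂ (⟨x, hx⟩ : s).val (⟨y, hy⟩ : s).val : ℂ) = 0 := by
    exact hs.2 (by simp [Subtype.ext_iff, hxy] : (⟨x, hx⟩ : s) ≠ ⟨y, hy⟩)
  have hnx : ‖x‖ = 1 := hs.1 ⟨x, hx⟩
  have hny : ‖y‖ = 1 := hs.1 ⟨y, hy⟩
  have hsub : ‖x - y‖ ^ 2 = 2 := by
    have := @norm_sub_sq ℂ _ _ _ _ x y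
    rw [hnx, hny] at this
    simp only [hips] at this
    norm_num at this
    linarith
  have h2 : dist x y ^ 2 = 2 := by rw [dist_eq_norm]; exact hsub
  nlinarith [dist_nonneg (x := x) (y := y)]

/-- a separable infinite-dimensional complex Hilbert space is isometric to ℓ²(ℕ). -/
lemma sep_infdim_iso_l2 (X : Type*) [NormedAddCommGroup X] [InnerProductSpace ℂ X]
    [CompleteSpace X] [TopologicalSpace.SeparableSpace X] (hfd : ¬ FiniteDimensional ℂ X) :
    Nonempty (X ≃ₗᵢ[ℂ] lp (fun _ : ℕ => ℂ) 2) := by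
  obtain ⟨w, b, hb⟩ := exists_hilbertBasis ℂ X
  have hw_on : Orthonormal ℂ ((↑) : w → X) := by
    have := b.orthonormal
    rwa [hb] at this
  have hwc : w.Countable := orthonormal_set_countable hw_on
  have hwi : w.Infinite := by
    by_contra hfin
    rw [Set.not_infinite] at hfin
    apply hfd
    have hdense := b.dense_span
    rw [hb] at hdense
    have : Submodule.span ℂ w = ⊤ := by
      have hclosed : IsClosed ((Submodule.span ℂ w : Submodule ℂ X) : Set X) := by
        haveI : FiniteDimensional ℂ (Submodule.span ℂ w) :=
          FiniteDimensional.span_of_finite ℂ hfin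
        exact Submodule.closed_of_finiteDimensional _
      have : (Submodule.span ℂ (Set.range ((↑) : w → X))).topologicalClosure = ⊤ := hdense
      rw [Subtype.range_coe] at this
      rwa [IsClosed.submodule_topologicalClosure_eq hclosed] at this
    exact FiniteDimensional.of_finite_basis (Module.Basis.mk (v := ((↑) : w → X)) hw_on.linearIndependent
      (by rw [Subtype.range_coe, this])) hfin
  haveI : Countable w := hwc.to_subtype
  haveI : Infinite w := hwi.to_subtype
  obtain ⟨e⟩ := nonempty_equiv_of_countable (α := ℕ) (β := w)
  -- reindexed Hilbert basis
  have hv_on : Orthonormal ℂ (fun n : ℕ => (b (e n) : X)) := by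
    rw [hb]
    exact hw_on.comp e e.injective
  have hv_dense : ⊤ ≤ (Submodule.span ℂ (Set.range fun n : ℕ => (b (e n) : X))).topologicalClosure := by
    have hr : (Set.range fun n : ℕ => (b (e n) : X)) = Set.range (⇑b) := by
      rw [← Function.comp_def]
      exact e.surjective.range_comp ⇑b
    rw [hr]
    exact b.dense_span.ge
  exact ⟨(HilbertBasis.mk hv_on hv_dense).repr⟩


/-- two separable Hilbert spaces that are continuously linearly equivalent are isometric. -/
lemma iso_of_cle {X Y : Type*} [NormedAddCommGroup X] [InnerProductSpace ℂ X]
    [CompleteSpace X] [TopologicalSpace.SeparableSpace X]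
    [NormedAddCommGroup Y] [InnerProductSpace ℂ Y] [CompleteSpace Y]
    (e : X ≃L[ℂ] Y) : Nonempty (X ≃ₗᵢ[ℂ] Y) := by
  haveI : TopologicalSpace.SeparableSpace Y :=
    e.surjective.denseRange.separableSpace e.continuous
  by_cases hfd : FiniteDimensional ℂ X
  · haveI : FiniteDimensional ℂ Y := Module.Finite.equiv e.toLinearEquiv
    have hrk : Module.finrank ℂ X = Module.finrank ℂ Y := e.toLinearEquiv.finrank_eq
    have bX := stdOrthonormalBasis ℂ X
    have bY := stdOrthonormalBasis ℂ Y
    exact ⟨(bX.reindex (finCongr hrk)).repr.trans bY.repr.symm⟩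
  · have hfdY : ¬ FiniteDimensional ℂ Y := fun h =>
      hfd (Module.Finite.equiv e.symm.toLinearEquiv)
    obtain ⟨fX⟩ := sep_infdim_iso_l2 X hfd
    obtain ⟨fY⟩ := sep_infdim_iso_l2 Y hfdY
    exact ⟨fX.trans fY.symm⟩



lemma rpow_toReal_two (a : ℝ) : a ^ ((2:ℝ≥0∞).toReal) = a ^ (2:ℕ) := by
  rw [show ((2:ℝ≥0∞).toReal) = ((2:ℕ):ℝ) by norm_num, Real.rpow_natCast]

set_option maxHeartbeats 2000000 in
/-- A family `Λ = (Λ_i : H → K_i)_{i∈I}` is a g-Riesz basis for `H` if and only if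
there exist a g-orthonormal basis `(Θ_i)_{i∈I}` and `U ∈ GL(H)` with `Λ_i = Θ_i ∘ U`. -/
theorem gRieszBasis_iff_gOrthonormalBasis_comp_invertible
    {H : Type*} [NormedAddCommGroup H] [InnerProductSpace ℂ H] [CompleteSpace H]
    [TopologicalSpace.SeparableSpace H]
    {I : Type*} [Countable I]
    (K : I → Type*) [∀ i, NormedAddCommGroup (K i)] [∀ i, InnerProductSpace ℂ (K i)]
    [∀ i, CompleteSpace (K i)] [∀ i, TopologicalSpace.SeparableSpace (K i)]
    (Λ : ∀ i : I, H →L[ℂ] K i) :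
    ((∀ f : H, (∀ i : I, Λ i f = 0) → f = 0) ∧
      ∃ A B : ℝ, 0 < A ∧ A ≤ B ∧
        ∀ (F : Finset I) (g : ∀ i : I, K i),
          A * ∑ i ∈ F, ‖g i‖ ^ 2 ≤ ‖∑ i ∈ F, ContinuousLinearMap.adjoint (Λ i) (g i)‖ ^ 2 ∧
          ‖∑ i ∈ F, ContinuousLinearMap.adjoint (Λ i) (g i)‖ ^ 2 ≤ B * ∑ i ∈ F, ‖g i‖ ^ 2) ↔
    (∃ (Θ : ∀ i : I, H →L[ℂ] K i) (U : H ≃L[ℂ] H),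
      (∀ (i : I) (g h : K i),
        (inner ℂ (ContinuousLinearMap.adjoint (Θ i) g) (ContinuousLinearMap.adjoint (Θ i) h) : ℂ) =
          (inner ℂ g h : ℂ)) ∧
      (∀ (i j : I), i ≠ j → ∀ (g : K i) (h : K j),
        (inner ℂ (ContinuousLinearMap.adjoint (Θ i) g) (ContinuousLinearMap.adjoint (Θ j) h) : ℂ)
          = 0) ∧
      (∀ f : H, Summable fun i : I => ‖Θ i f‖ ^ 2) ∧
      (∀ f : H, ∑' i : I, ‖Θ i f‖ ^ 2 = ‖f‖ ^ 2) ∧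
      (∀ i : I, Λ i = (Θ i).comp (U : H →L[ℂ] H))) := by
  constructor
  · rintro ⟨hcomp, A, B, hA, hAB, hbound⟩
    have hB : 0 < B := lt_of_lt_of_le hA hAB
    classical
    have hBessel : ∀ (f : H) (F : Finset I), ∑ i ∈ F, ‖Λ i f‖ ^ 2 ≤ B * ‖f‖ ^ 2 := by
      intro f F
      set s := ∑ i ∈ F, ‖Λ i f‖ ^ 2 with hs
      have hs0 : 0 ≤ s := Finset.sum_nonneg fun i _ => by positivity
      set y := ∑ i ∈ F, ContinuousLinearMap.adjoint (Λ i) (Λ i f) with hy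
      have hyb : ‖y‖ ^ 2 ≤ B * s := (hbound F (fun i => Λ i f)).2
      have hip : (inner ℂ f y : ℂ) = ((s : ℝ) : ℂ) := by
        rw [hy, inner_sum, hs]
        rw [Complex.ofReal_sum]
        refine Finset.sum_congr rfl fun i _ => ?_
        rw [ContinuousLinearMap.adjoint_inner_right, inner_self_eq_norm_sq_to_K]
        norm_cast
      have hsle : s ≤ ‖f‖ * ‖y‖ := by
        have h1 : s = Complex.re (inner ℂ f y : ℂ) := by rw [hip]; simp
        rw [h1]
        calc Complex.re (inner ℂ f y : ℂ) ≤ ‖(inner ℂ f y : ℂ)‖ := Complex.re_le_norm _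
          _ ≤ ‖f‖ * ‖y‖ := norm_inner_le_norm f y
      rcases eq_or_lt_of_le hs0 with h0 | h0
      · rw [← h0]; positivity
      · nlinarith [norm_nonneg f, norm_nonneg y, sq_nonneg (‖f‖*‖y‖ - s)]
    have hsummable : ∀ f : H, Summable fun i => ‖Λ i f‖ ^ 2 :=
      fun f => summable_of_sum_le (fun i => by positivity) (fun F => hBessel f F)
    have hmem : ∀ f : H, Memℓp (fun i => Λ i f) 2 := by
      intro f
      apply memℓp_gen
      have := hsummable f
      simpa [rpow_toReal_two] using this
    let Vlin : H →ₗ[ℂ] lp K 2 :=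
      { toFun := fun f => ⟨fun i => Λ i f, hmem f⟩
        map_add' := fun f g => by
          apply Subtype.ext
          funext i
          exact map_add (Λ i) f g
        map_smul' := fun c f => by
          apply Subtype.ext
          funext i
          exact map_smul (Λ i) c f }
    have hVnorm : ∀ f, ‖Vlin f‖ ^ 2 ≤ B * ‖f‖ ^ 2 := by
      intro f
      rw [lp_norm_sq_eq_tsum]
      exact Summable.tsum_le_of_sum_le (hsummable f) (fun F => hBessel f F)
    let V : H →L[ℂ] lp K 2 := Vlin.mkContinuous (Real.sqrt B) (fun f => by
      have h1 : ‖Vlin f‖^2 ≤ (Real.sqrt B * ‖f‖)^2 := by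
        rw [mul_pow, Real.sq_sqrt hB.le]
        exact hVnorm f
      calc ‖Vlin f‖ = Real.sqrt (‖Vlin f‖^2) := (Real.sqrt_sq (norm_nonneg _)).symm
        _ ≤ Real.sqrt ((Real.sqrt B * ‖f‖)^2) := Real.sqrt_le_sqrt h1
        _ = Real.sqrt B * ‖f‖ := Real.sqrt_sq (by positivity))
    have hVapp : ∀ (f : H) (i : I), (V f : ∀ i, K i) i = Λ i f := fun f i => rfl
    let T : lp K 2 →L[ℂ] H := ContinuousLinearMap.adjoint V
    have hTV : ContinuousLinearMap.adjoint T = V := ContinuousLinearMap.adjoint_adjoint V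
    have hTsingle : ∀ (i : I) (g : K i),
        T (lp.single 2 i g) = ContinuousLinearMap.adjoint (Λ i) g := by
      intro i g
      refine ext_inner_right ℂ fun f => ?_
      rw [ContinuousLinearMap.adjoint_inner_left, ContinuousLinearMap.adjoint_inner_left]
      exact lp.inner_single_left i g (V f)
    have hTsum : ∀ (F : Finset I) (g : ∀ i, K i),
        T (∑ i ∈ F, lp.single 2 i (g i)) = ∑ i ∈ F, ContinuousLinearMap.adjoint (Λ i) (g i) := by
      intro F g
      rw [map_sum]
      exact Finset.sum_congr rfl fun i _ => hTsingle i (g i)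
    have hnormsum : ∀ (F : Finset I) (g : ∀ i, K i),
        ‖∑ i ∈ F, lp.single 2 i (g i)‖ ^ 2 = ∑ i ∈ F, ‖g i‖ ^ 2 := by
      intro F g
      have h := lp.norm_sum_single (p := 2) (by norm_num) g F
      simpa [rpow_toReal_two] using h
    have hTlow : ∀ x : lp K 2, A * ‖x‖ ^ 2 ≤ ‖T x‖ ^ 2 := by
      intro x
      have hmemS : ∀ F : Finset I,
          (∑ i ∈ F, lp.single 2 i (x i)) ∈ {y : lp K 2 | A * ‖y‖^2 ≤ ‖T y‖^2} := by
        intro F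
        simp only [Set.mem_setOf_eq]
        rw [hTsum F (fun i => x i), hnormsum F (fun i => x i)]
        exact (hbound F (fun i => x i)).1
      have hcl : IsClosed {y : lp K 2 | A * ‖y‖^2 ≤ ‖T y‖^2} :=
        isClosed_le (continuous_const.mul (continuous_norm.pow 2))
          ((T.continuous.norm).pow 2)
      have hx := lp.hasSum_single (E := K) (by norm_num : (2:ℝ≥0∞) ≠ ⊤) x
      exact hcl.mem_of_tendsto hx (Filter.Eventually.of_forall hmemS)
    have hker : T.ker = ⊥ := by
      rw [LinearMap.ker_eq_bot']
      intro x hx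
      have h := hTlow x
      rw [show T x = 0 from hx] at h
      norm_num at h
      have h2 : ‖x‖^2 = 0 := le_antisymm (by nlinarith) (sq_nonneg _)
      exact norm_eq_zero.mp (pow_eq_zero_iff two_ne_zero |>.mp h2)
    have hTanti : AntilipschitzWith (⟨(Real.sqrt A)⁻¹, by positivity⟩ : ℝ≥0) T := by
      apply T.antilipschitz_of_bound
      intro x
      have h := hTlow x
      have h1 : Real.sqrt A * ‖x‖ ≤ ‖T x‖ := by
        have h2 : Real.sqrt (A * ‖x‖^2) ≤ Real.sqrt (‖T x‖^2) := Real.sqrt_le_sqrt h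
        rwa [Real.sqrt_mul hA.le, Real.sqrt_sq (norm_nonneg _), Real.sqrt_sq (norm_nonneg _)]
          at h2
      have hsA : 0 < Real.sqrt A := Real.sqrt_pos.mpr hA
      change ‖x‖ ≤ (Real.sqrt A)⁻¹ * ‖T x‖
      rw [inv_mul_eq_div, le_div_iff₀ hsA]
      nlinarith
    have hrange : T.range = ⊤ := by
      have hcl := ContinuousLinearMap.closed_range_of_antilipschitz hTanti
      rw [← hcl, Submodule.topologicalClosure_eq_top_iff, Submodule.eq_bot_iff]
      intro f hf
      apply hcomp
      intro i
      have hfi : (inner ℂ (ContinuousLinearMap.adjoint (Λ i) (Λ i f)) f : ℂ) = 0 :=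
        (Submodule.mem_orthogonal _ f).mp hf _ ⟨lp.single 2 i (Λ i f), hTsingle i (Λ i f)⟩
      rw [ContinuousLinearMap.adjoint_inner_left] at hfi
      exact inner_self_eq_zero.mp hfi
    let E := ContinuousLinearEquiv.ofBijective T hker hrange
    have hEcoe : (E : lp K 2 →L[ℂ] H) = T := ContinuousLinearEquiv.coe_ofBijective T hker hrange
    haveI : TopologicalSpace.SeparableSpace (lp K 2) :=
      E.symm.surjective.denseRange.separableSpace E.symm.continuous
    obtain ⟨W⟩ := iso_of_cle (X := H) (Y := lp K 2) E.symm
    let proj : ∀ i, lp K 2 →L[ℂ] K i := fun i =>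
      LinearMap.mkContinuous
        { toFun := fun x : lp K 2 => x i
          map_add' := fun x y => rfl
          map_smul' := fun c x => rfl }
        1 (fun x => by
          rw [one_mul]
          exact lp.norm_apply_le_norm (by norm_num : (2:ℝ≥0∞) ≠ 0) x i)
    let Wc : H →L[ℂ] lp K 2 := (W.toContinuousLinearEquiv : H →L[ℂ] lp K 2)
    let Θ : ∀ i, H →L[ℂ] K i := fun i => (proj i).comp Wc
    have hΘ : ∀ (i : I) (f : H), Θ i f = (W f) i := fun i f => rfl
    have hΘadj : ∀ (i : I) (g : K i),
        ContinuousLinearMap.adjoint (Θ i) g = W.symm (lp.single 2 i g) := by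
      intro i g
      refine ext_inner_right ℂ fun f => ?_
      rw [ContinuousLinearMap.adjoint_inner_left]
      have h1 : (inner ℂ (W.symm (lp.single 2 i g)) f : ℂ)
          = inner ℂ (lp.single 2 i g) (W f) := by
        rw [← W.inner_map_map (W.symm (lp.single 2 i g)) f, W.apply_symm_apply]
      rw [h1, lp.inner_single_left]
      rw [hΘ]
    -- construct U
    have hcomp1 : (E : lp K 2 →L[ℂ] H).comp (E.symm : H →L[ℂ] lp K 2)
        = ContinuousLinearMap.id ℂ H := by
      ext z
      simp
    have hcomp2 : (E.symm : H →L[ℂ] lp K 2).comp (E : lp K 2 →L[ℂ] H)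
        = ContinuousLinearMap.id ℂ (lp K 2) := by
      ext z
      simp
    let Vi : lp K 2 →L[ℂ] H := ContinuousLinearMap.adjoint (E.symm : H →L[ℂ] lp K 2)
    have hVVi : V.comp Vi = ContinuousLinearMap.id ℂ (lp K 2) := by
      have h := congrArg ContinuousLinearMap.adjoint hcomp2
      rw [ContinuousLinearMap.adjoint_comp, ContinuousLinearMap.adjoint_id, hEcoe, hTV] at h
      exact h
    have hViV : Vi.comp V = ContinuousLinearMap.id ℂ H := by
      have h := congrArg ContinuousLinearMap.adjoint hcomp1
      rw [ContinuousLinearMap.adjoint_comp, ContinuousLinearMap.adjoint_id, hEcoe, hTV] at h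
      exact h
    let Vcle : H ≃L[ℂ] lp K 2 := ContinuousLinearEquiv.equivOfInverse V Vi
      (fun f => DFunLike.congr_fun hViV f) (fun x => DFunLike.congr_fun hVVi x)
    let U : H ≃L[ℂ] H := Vcle.trans W.toContinuousLinearEquiv.symm
    have hUapp : ∀ f : H, (U : H →L[ℂ] H) f = W.symm (V f) := fun f => rfl
    refine ⟨Θ, U, ?_, ?_, ?_, ?_, ?_⟩
    · intro i g h
      rw [hΘadj i g, hΘadj i h, LinearIsometryEquiv.inner_map_map]
      rw [lp.inner_single_left, lp.single_apply_self]
    · intro i j hij g h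
      rw [hΘadj i g, hΘadj j h, LinearIsometryEquiv.inner_map_map]
      rw [lp.inner_single_left, lp.single_apply_ne 2 j _ hij]
      exact inner_zero_right _
    · intro f
      have hs := (lp.memℓp (W f)).summable (by norm_num : 0 < (2:ℝ≥0∞).toReal)
      simp only [rpow_toReal_two] at hs
      exact hs.congr fun i => by rw [hΘ]
    · intro f
      have h1 : ∑' i, ‖Θ i f‖ ^ 2 = ∑' i, ‖(W f) i‖ ^ 2 :=
        tsum_congr fun i => by rw [hΘ]
      rw [h1, ← lp_norm_sq_eq_tsum K (W f), W.norm_map]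
    · intro i
      ext f
      simp only [ContinuousLinearMap.coe_comp', Function.comp_apply]
      rw [hΘ i ((U : H →L[ℂ] H) f), hUapp f, LinearIsometryEquiv.apply_symm_apply]
      exact (hVapp f i).symm
  · rintro ⟨Θ, U, h1, h2, h3, h4, h5⟩
    constructor
    · intro f hf
      have hU : ∀ i, Θ i (U f) = 0 := by
        intro i
        have := hf i
        rw [h5 i] at this
        simpa using this
      have hUf2 : ‖U f‖ ^ 2 = 0 := by
        rw [← h4 (U f)]
        simp [hU]
      have hUf : U f = 0 := by
        have := pow_eq_zero_iff (two_ne_zero) |>.mp hUf2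
        exact norm_eq_zero.mp this
      exact U.injective (by rw [hUf, map_zero])
    · set U' := (U : H →L[ℂ] H) with hU'
      set Us := ((U.symm : H →L[ℂ] H)) with hUs
      set m := max ‖ContinuousLinearMap.adjoint Us‖ 1 with hm
      set M := max ‖ContinuousLinearMap.adjoint U'‖ 1 with hM
      have hm1 : (1:ℝ) ≤ m := le_max_right _ _
      have hM1 : (1:ℝ) ≤ M := le_max_right _ _
      refine ⟨(m^2)⁻¹, M^2, by positivity, ?_, ?_⟩
      · have h1' : (m^2)⁻¹ ≤ 1 := by
          rw [inv_le_one_iff₀]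
          right; nlinarith
        nlinarith
      · intro F g
        set x := ∑ i ∈ F, ContinuousLinearMap.adjoint (Θ i) (g i) with hx
        have hsum : ∑ i ∈ F, ContinuousLinearMap.adjoint (Λ i) (g i)
            = ContinuousLinearMap.adjoint U' x := by
          rw [hx, map_sum]
          refine Finset.sum_congr rfl fun i _ => ?_
          rw [h5 i, ContinuousLinearMap.adjoint_comp]
          rfl
        have hxnorm : ‖x‖ ^ 2 = ∑ i ∈ F, ‖g i‖ ^ 2 := by
          have hinner : (inner ℂ x x : ℂ) = ∑ i ∈ F, (inner ℂ (g i) (g i) : ℂ) := by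
            rw [hx, sum_inner]
            refine Finset.sum_congr rfl fun i hi => ?_
            rw [inner_sum, Finset.sum_eq_single i]
            · exact h1 i (g i) (g i)
            · intro j _ hji
              exact h2 i j (fun hc => hji hc.symm) (g i) (g j)
            · intro hni; exact absurd hi hni
          rw [← inner_self_eq_norm_sq (𝕜 := ℂ) x, hinner, map_sum]
          exact Finset.sum_congr rfl fun i _ => inner_self_eq_norm_sq (g i)
        rw [hsum, ← hxnorm]
        have hux : ‖ContinuousLinearMap.adjoint U' x‖ ≤ M * ‖x‖ := by
          calc ‖ContinuousLinearMap.adjoint U' x‖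
              ≤ ‖ContinuousLinearMap.adjoint U'‖ * ‖x‖ := le_opNorm _ _
            _ ≤ M * ‖x‖ := by
                have := le_max_left ‖ContinuousLinearMap.adjoint U'‖ (1:ℝ)
                nlinarith [norm_nonneg x]
        have hxle : ‖x‖ ≤ m * ‖ContinuousLinearMap.adjoint U' x‖ := by
          have hid : U'.comp Us = ContinuousLinearMap.id ℂ H := by
            ext z
            simp [hU', hUs]
          have hcomp : (ContinuousLinearMap.adjoint Us).comp (ContinuousLinearMap.adjoint U')
              = ContinuousLinearMap.id ℂ H := by
            rw [← ContinuousLinearMap.adjoint_comp, hid, ContinuousLinearMap.adjoint_id]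
          have hxid : ContinuousLinearMap.adjoint Us (ContinuousLinearMap.adjoint U' x) = x := by
            have := DFunLike.congr_fun hcomp x
            simpa using this
          calc ‖x‖ = ‖ContinuousLinearMap.adjoint Us (ContinuousLinearMap.adjoint U' x)‖ := by
                rw [hxid]
            _ ≤ ‖ContinuousLinearMap.adjoint Us‖ * ‖ContinuousLinearMap.adjoint U' x‖ :=
                le_opNorm _ _
            _ ≤ m * ‖ContinuousLinearMap.adjoint U' x‖ := by
                have := le_max_left ‖ContinuousLinearMap.adjoint Us‖ (1:ℝ)
                nlinarith [norm_nonneg (ContinuousLinearMap.adjoint U' x)]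
        constructor
        · rw [inv_mul_le_iff₀ (by positivity)]
          nlinarith [norm_nonneg x, norm_nonneg (ContinuousLinearMap.adjoint U' x)]
        · nlinarith [norm_nonneg x, norm_nonneg (ContinuousLinearMap.adjoint U' x)]

end
end

section
/- Let Λ = (Λ_i)_{i∈ℕ} be a g-frame for H with respect to K, and suppose there exists a dual g-frame Θ = (Θ_i)_{i∈ℕ} of Λ such that Λ_{k+1} f = Σ_{i∈ℕ} Λ_k(Θ_i*(Λ_{i+1} f)) for every k ∈ ℕ and f ∈ H. Then Λ is represented by a bounded operator: the formula T f = Σ_{i∈ℕ} Θ_i*(Λ_{i+1} f) defines a bounded linear operator T : H → H satisfying Λ_{i+1} = Λ_i ∘ T for all i ∈ ℕ. -/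
open ContinuousLinearMap

private lemma synth_finset_bound
    {H K : Type*} [NormedAddCommGroup H] [InnerProductSpace ℂ H] [CompleteSpace H]
    [NormedAddCommGroup K] [InnerProductSpace ℂ K] [CompleteSpace K]
    (Θ : ℕ → (H →L[ℂ] K)) (B' : ℝ)
    (hB' : 0 ≤ B')
    (hsumΘ : ∀ f : H, Summable fun i : ℕ => ‖Θ i f‖ ^ 2)
    (hupΘ : ∀ f : H, ∑' i : ℕ, ‖Θ i f‖ ^ 2 ≤ B' * ‖f‖ ^ 2)
    (c : ℕ → K) (t : Finset ℕ) :
    ‖∑ i ∈ t, ContinuousLinearMap.adjoint (Θ i) (c i)‖ ^ 2 ≤ B' * ∑ i ∈ t, ‖c i‖ ^ 2 := by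
  set g : H := ∑ i ∈ t, ContinuousLinearMap.adjoint (Θ i) (c i) with hg
  have key : ‖g‖ ^ 2 ≤ ∑ i ∈ t, ‖c i‖ * ‖Θ i g‖ := by
    have h1 : (‖g‖ : ℝ) ^ 2 = RCLike.re (inner ℂ g g : ℂ) := by
      rw [inner_self_eq_norm_sq]
    rw [h1]
    have h2 : (inner ℂ g g : ℂ) = ∑ i ∈ t, (inner ℂ (c i) (Θ i g) : ℂ) := by
      rw [hg, sum_inner]
      exact Finset.sum_congr rfl fun i _ => adjoint_inner_left _ _ _
    rw [h2, map_sum]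
    exact Finset.sum_le_sum fun i _ => re_inner_le_norm _ _
  have cs : (∑ i ∈ t, ‖c i‖ * ‖Θ i g‖) ^ 2 ≤
      (∑ i ∈ t, ‖c i‖ ^ 2) * ∑ i ∈ t, ‖Θ i g‖ ^ 2 :=
    Finset.sum_mul_sq_le_sq_mul_sq t _ _
  have hΘg : ∑ i ∈ t, ‖Θ i g‖ ^ 2 ≤ B' * ‖g‖ ^ 2 :=
    le_trans (Summable.sum_le_tsum t (fun i _ => sq_nonneg _) (hsumΘ g)) (hupΘ g)
  have hcnn : 0 ≤ ∑ i ∈ t, ‖c i‖ ^ 2 := Finset.sum_nonneg fun i _ => sq_nonneg _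
  have h4 : (‖g‖ ^ 2) ^ 2 ≤ (∑ i ∈ t, ‖c i‖ ^ 2) * (B' * ‖g‖ ^ 2) := by
    calc (‖g‖ ^ 2) ^ 2 ≤ (∑ i ∈ t, ‖c i‖ * ‖Θ i g‖) ^ 2 := by
          apply pow_le_pow_left₀ (sq_nonneg _) key
      _ ≤ (∑ i ∈ t, ‖c i‖ ^ 2) * ∑ i ∈ t, ‖Θ i g‖ ^ 2 := cs
      _ ≤ (∑ i ∈ t, ‖c i‖ ^ 2) * (B' * ‖g‖ ^ 2) := by
          exact mul_le_mul_of_nonneg_left hΘg hcnn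
  rcases eq_or_lt_of_le (sq_nonneg ‖g‖) with h0 | h0
  · rw [← h0]
    positivity
  · have := h4
    nlinarith [h0]

private lemma synth_summable
    {H K : Type*} [NormedAddCommGroup H] [InnerProductSpace ℂ H] [CompleteSpace H]
    [NormedAddCommGroup K] [InnerProductSpace ℂ K] [CompleteSpace K]
    (Θ : ℕ → (H →L[ℂ] K)) (B' : ℝ)
    (hB' : 0 ≤ B')
    (hsumΘ : ∀ f : H, Summable fun i : ℕ => ‖Θ i f‖ ^ 2)
    (hupΘ : ∀ f : H, ∑' i : ℕ, ‖Θ i f‖ ^ 2 ≤ B' * ‖f‖ ^ 2)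
    (c : ℕ → K) (hc : Summable fun i => ‖c i‖ ^ 2) :
    Summable fun i : ℕ => ContinuousLinearMap.adjoint (Θ i) (c i) := by
  rw [summable_iff_vanishing]
  intro e he
  rcases Metric.mem_nhds_iff.mp he with ⟨ε, hε, hball⟩
  have hc' := (summable_iff_vanishing.mp hc) (Metric.ball 0 (ε ^ 2 / (B' + 1)))
    (Metric.ball_mem_nhds 0 (by positivity))
  rcases hc' with ⟨s, hs⟩
  refine ⟨s, fun t ht => ?_⟩
  apply hball
  simp only [Metric.mem_ball, dist_zero_right]
  have hb := synth_finset_bound Θ B' hB' hsumΘ hupΘ c t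
  have h1 := hs t ht
  simp only [Metric.mem_ball, dist_zero_right, Real.norm_eq_abs] at h1
  have h2 : ∑ i ∈ t, ‖c i‖ ^ 2 < ε ^ 2 / (B' + 1) := by
    have : |∑ i ∈ t, ‖c i‖ ^ 2| = ∑ i ∈ t, ‖c i‖ ^ 2 :=
      abs_of_nonneg (Finset.sum_nonneg fun i _ => sq_nonneg _)
    linarith [this ▸ h1]
  have h3 : ‖∑ i ∈ t, ContinuousLinearMap.adjoint (Θ i) (c i)‖ ^ 2 < ε ^ 2 := by
    calc ‖∑ i ∈ t, ContinuousLinearMap.adjoint (Θ i) (c i)‖ ^ 2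
        ≤ B' * ∑ i ∈ t, ‖c i‖ ^ 2 := hb
      _ ≤ (B' + 1) * ∑ i ∈ t, ‖c i‖ ^ 2 := by
          have : 0 ≤ ∑ i ∈ t, ‖c i‖ ^ 2 := Finset.sum_nonneg fun i _ => sq_nonneg _
          nlinarith
      _ < (B' + 1) * (ε ^ 2 / (B' + 1)) := by
          apply mul_lt_mul_of_pos_left h2 (by positivity)
      _ = ε ^ 2 := by field_simp
  nlinarith [norm_nonneg (∑ i ∈ t, ContinuousLinearMap.adjoint (Θ i) (c i))]

/-- If a g-frame `Λ = (Λ_i)_{i∈ℕ}` has a dual g-frame `Θ` satisfying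
`Λ_{k+1} f = ∑_i Λ_k (Θ_i* (Λ_{i+1} f))` for all `k, f`, then
`T f := ∑_i Θ_i* (Λ_{i+1} f)` defines a bounded operator representing `Λ`. -/
theorem gframe_representation_of_dual_identity
    {H K : Type*} [NormedAddCommGroup H] [InnerProductSpace ℂ H] [CompleteSpace H]
    [TopologicalSpace.SeparableSpace H]
    [NormedAddCommGroup K] [InnerProductSpace ℂ K] [CompleteSpace K]
    [TopologicalSpace.SeparableSpace K]
    (Λ Θ : ℕ → (H →L[ℂ] K)) (A B A' B' : ℝ) (hA : 0 < A) (hAB : A ≤ B)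
    (hA' : 0 < A') (hAB' : A' ≤ B')
    (hsumΛ : ∀ f : H, Summable fun i : ℕ => ‖Λ i f‖ ^ 2)
    (hlowΛ : ∀ f : H, A * ‖f‖ ^ 2 ≤ ∑' i : ℕ, ‖Λ i f‖ ^ 2)
    (hupΛ : ∀ f : H, ∑' i : ℕ, ‖Λ i f‖ ^ 2 ≤ B * ‖f‖ ^ 2)
    (hsumΘ : ∀ f : H, Summable fun i : ℕ => ‖Θ i f‖ ^ 2)
    (hlowΘ : ∀ f : H, A' * ‖f‖ ^ 2 ≤ ∑' i : ℕ, ‖Θ i f‖ ^ 2)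
    (hupΘ : ∀ f : H, ∑' i : ℕ, ‖Θ i f‖ ^ 2 ≤ B' * ‖f‖ ^ 2)
    (hdual : ∀ f : H, (∑' i : ℕ, ContinuousLinearMap.adjoint (Λ i) (Θ i f)) = f)
    (hid : ∀ (k : ℕ) (f : H),
      Λ (k + 1) f = ∑' i : ℕ, Λ k (ContinuousLinearMap.adjoint (Θ i) (Λ (i + 1) f))) :
    ∃ T : H →L[ℂ] H,
      (∀ f : H, T f = ∑' i : ℕ, ContinuousLinearMap.adjoint (Θ i) (Λ (i + 1) f)) ∧
      ∀ i : ℕ, Λ (i + 1) = (Λ i).comp T := by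
  have hsucc : Function.Injective (fun i : ℕ => i + 1) := add_left_injective 1
  have hc : ∀ f : H, Summable fun i : ℕ => ‖Λ (i + 1) f‖ ^ 2 := fun f =>
    (hsumΛ f).comp_injective hsucc
  have hS : ∀ f : H, Summable fun i : ℕ =>
      ContinuousLinearMap.adjoint (Θ i) (Λ (i + 1) f) := fun f =>
    synth_summable Θ B' (le_trans hA'.le hAB') hsumΘ hupΘ _ (hc f)
  have hshift : ∀ f : H, (∑' i : ℕ, ‖Λ (i + 1) f‖ ^ 2) ≤ B * ‖f‖ ^ 2 := fun f =>
    le_trans (Summable.tsum_le_tsum_of_inj (fun i : ℕ => i + 1) hsucc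
      (fun c _ => sq_nonneg _) (fun i => le_refl _) (hc f) (hsumΛ f)) (hupΛ f)
  set Tlin : H →ₗ[ℂ] H :=
    { toFun := fun f => ∑' i : ℕ, ContinuousLinearMap.adjoint (Θ i) (Λ (i + 1) f)
      map_add' := fun f g => by
        simp only [map_add]
        exact Summable.tsum_add (hS f) (hS g)
      map_smul' := fun c f => by
        simp only [map_smul, RingHom.id_apply]
        exact Summable.tsum_const_smul c (hS f) } with hTlin
  have hbound : ∀ f : H, ‖Tlin f‖ ≤ Real.sqrt (B' * B) * ‖f‖ := by
    intro f
    have hB'nn : 0 ≤ B' := le_trans hA'.le hAB'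
    have hBnn : 0 ≤ B := le_trans hA.le hAB
    have hsq : ‖Tlin f‖ ^ 2 ≤ B' * B * ‖f‖ ^ 2 := by
      have htend2 : Filter.Tendsto
          (fun t : Finset ℕ => ‖∑ i ∈ t, ContinuousLinearMap.adjoint (Θ i) (Λ (i + 1) f)‖ ^ 2)
          Filter.atTop (nhds (‖Tlin f‖ ^ 2)) := by
        exact ((hS f).hasSum).norm.pow 2
      refine le_of_tendsto htend2 (Filter.Eventually.of_forall fun t => ?_)
      calc ‖∑ i ∈ t, ContinuousLinearMap.adjoint (Θ i) (Λ (i + 1) f)‖ ^ 2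
          ≤ B' * ∑ i ∈ t, ‖Λ (i + 1) f‖ ^ 2 := synth_finset_bound Θ B' hB'nn hsumΘ hupΘ _ t
        _ ≤ B' * (B * ‖f‖ ^ 2) := by
            apply mul_le_mul_of_nonneg_left _ hB'nn
            exact le_trans (Summable.sum_le_tsum t (fun i _ => sq_nonneg _) (hc f)) (hshift f)
        _ = B' * B * ‖f‖ ^ 2 := by ring
    have := Real.sqrt_le_sqrt hsq
    rwa [Real.sqrt_sq (norm_nonneg _), Real.sqrt_mul (by positivity),
      Real.sqrt_sq (norm_nonneg f)] at this
  refine ⟨Tlin.mkContinuous (Real.sqrt (B' * B)) hbound, fun f => rfl, fun k => ?_⟩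
  ext f
  rw [ContinuousLinearMap.comp_apply]
  show Λ (k + 1) f = Λ k (Tlin f)
  rw [hid k f]
  exact ((Λ k).map_tsum (hS f)).symm
end

section
/- Let Λ = (Λ_i)_{i∈ℤ} be a g-frame for H with respect to K represented by an invertible bounded operator T : H → H with bounded inverse, and let S : H → H be the g-frame operator of Λ (so S f = Σ_{i∈ℤ} Λ_i*(Λ_i f) for all f ∈ H; S is positive and invertible). Then T* S T = S; consequently S T S⁻¹ = (T*)⁻¹, and the canonical dual g-frame (Λ_i ∘ S⁻¹)_{i∈ℤ} is represented by (T*)⁻¹, i.e. Λ_{i+1} ∘ S⁻¹ = (Λ_i ∘ S⁻¹) ∘ (T*)⁻¹ for all i ∈ ℤ. -/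
open ContinuousLinearMap

/-- If a g-frame `Λ = (Λ_i)_{i∈ℤ}` is represented by `T ∈ GL(H)` and `S` is its
(positive, invertible) g-frame operator, then `T* S T = S`, hence `S T S⁻¹ = (T*)⁻¹ = (T⁻¹)*`,
and the canonical dual `(Λ_i ∘ S⁻¹)` is represented by `(T*)⁻¹`. -/
theorem gframe_Z_canonical_dual_representation
    {H K : Type*} [NormedAddCommGroup H] [InnerProductSpace ℂ H] [CompleteSpace H]
    [TopologicalSpace.SeparableSpace H]
    [NormedAddCommGroup K] [InnerProductSpace ℂ K] [CompleteSpace K]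
    [TopologicalSpace.SeparableSpace K]
    (Λ : ℤ → (H →L[ℂ] K)) (A B : ℝ) (hA : 0 < A) (hAB : A ≤ B)
    (hsum : ∀ f : H, Summable fun i : ℤ => ‖Λ i f‖ ^ 2)
    (hlow : ∀ f : H, A * ‖f‖ ^ 2 ≤ ∑' i : ℤ, ‖Λ i f‖ ^ 2)
    (hup : ∀ f : H, ∑' i : ℤ, ‖Λ i f‖ ^ 2 ≤ B * ‖f‖ ^ 2)
    (T : H ≃L[ℂ] H) (hrep : ∀ i : ℤ, Λ (i + 1) = (Λ i).comp (T : H →L[ℂ] H))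
    (S : H →L[ℂ] H)
    (hS : ∀ f : H, S f = ∑' i : ℤ, ContinuousLinearMap.adjoint (Λ i) (Λ i f))
    (hSpos : S.IsPositive)
    (S' : H →L[ℂ] H) (hSS' : S.comp S' = 1) (hS'S : S'.comp S = 1) :
    ((ContinuousLinearMap.adjoint (T : H →L[ℂ] H)).comp (S.comp (T : H →L[ℂ] H)) = S) ∧
    ((S.comp ((T : H →L[ℂ] H).comp S')) =
      ContinuousLinearMap.adjoint (T.symm : H →L[ℂ] H)) ∧
    (∀ i : ℤ, (Λ (i + 1)).comp S' =
      ((Λ i).comp S').comp (ContinuousLinearMap.adjoint (T.symm : H →L[ℂ] H))) := by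
  set Tc : H →L[ℂ] H := (T : H →L[ℂ] H)
  set Tc' : H →L[ℂ] H := (T.symm : H →L[ℂ] H)
  have hTT' : Tc.comp Tc' = 1 := by
    ext x; simp [Tc, Tc']
  have hT'T : Tc'.comp Tc = 1 := by
    ext x; simp [Tc, Tc']
  -- adjoint T.symm is a two-sided inverse of adjoint T
  have hadj1 : (ContinuousLinearMap.adjoint Tc').comp (ContinuousLinearMap.adjoint Tc) = 1 := by
    rw [← adjoint_comp, hTT']
    exact adjoint_id
  have hadj2 : (ContinuousLinearMap.adjoint Tc).comp (ContinuousLinearMap.adjoint Tc') = 1 := by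
    rw [← adjoint_comp, hT'T]
    exact adjoint_id
  -- the adjoint of T as a continuous linear equivalence
  let e : H ≃L[ℂ] H := ContinuousLinearEquiv.equivOfInverse
    (ContinuousLinearMap.adjoint Tc) (ContinuousLinearMap.adjoint Tc')
    (fun x => by
      have := congrArg (fun (L : H →L[ℂ] H) => L x) hadj1
      simpa using this)
    (fun x => by
      have := congrArg (fun (L : H →L[ℂ] H) => L x) hadj2
      simpa using this)
  have hTadj : ∀ i : ℤ,
      (ContinuousLinearMap.adjoint Tc).comp (ContinuousLinearMap.adjoint (Λ i))
        = ContinuousLinearMap.adjoint (Λ (i + 1)) := by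
    intro i
    rw [hrep i, adjoint_comp]
  have eq1 : (ContinuousLinearMap.adjoint Tc).comp (S.comp Tc) = S := by
    ext f
    have h1 : (ContinuousLinearMap.adjoint Tc).comp (S.comp Tc) f
        = e (S (Tc f)) := rfl
    rw [h1, hS (Tc f), e.map_tsum]
    have h2 : ∀ i : ℤ,
        e (ContinuousLinearMap.adjoint (Λ i) (Λ i (Tc f)))
          = ContinuousLinearMap.adjoint (Λ (i + 1)) (Λ (i + 1) f) := by
      intro i
      have hx : Λ i (Tc f) = Λ (i + 1) f := by rw [hrep i]; rfl
      have hy := congrArg (fun (L : K →L[ℂ] H) => L (Λ (i + 1) f)) (hTadj i)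
      simp only [comp_apply] at hy
      show ContinuousLinearMap.adjoint Tc (ContinuousLinearMap.adjoint (Λ i) (Λ i (Tc f)))
        = ContinuousLinearMap.adjoint (Λ (i + 1)) (Λ (i + 1) f)
      rw [hx, hy]
    calc (∑' i : ℤ, e (ContinuousLinearMap.adjoint (Λ i) (Λ i (Tc f))))
        = ∑' i : ℤ, ContinuousLinearMap.adjoint (Λ (i + 1)) (Λ (i + 1) f) := by
          exact tsum_congr h2
      _ = ∑' i : ℤ, ContinuousLinearMap.adjoint (Λ i) (Λ i f) := by
          exact (Equiv.addRight (1 : ℤ)).tsum_eq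
            (fun j : ℤ => ContinuousLinearMap.adjoint (Λ j) (Λ j f))
      _ = S f := (hS f).symm
  refine ⟨eq1, ?_, ?_⟩
  · -- S T S' = adjoint (T.symm)
    have h3 : S.comp Tc = (ContinuousLinearMap.adjoint Tc').comp S := by
      calc S.comp Tc
          = ((ContinuousLinearMap.adjoint Tc').comp (ContinuousLinearMap.adjoint Tc)).comp
              (S.comp Tc) := by rw [hadj1]; ext x; rfl
        _ = (ContinuousLinearMap.adjoint Tc').comp
              ((ContinuousLinearMap.adjoint Tc).comp (S.comp Tc)) := by
              ext x; rfl
        _ = (ContinuousLinearMap.adjoint Tc').comp S := by rw [eq1]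
    calc S.comp (Tc.comp S')
        = (S.comp Tc).comp S' := by ext x; rfl
      _ = ((ContinuousLinearMap.adjoint Tc').comp S).comp S' := by rw [h3]
      _ = (ContinuousLinearMap.adjoint Tc').comp (S.comp S') := by ext x; rfl
      _ = ContinuousLinearMap.adjoint Tc' := by rw [hSS']; ext x; rfl
  · -- canonical dual representation
    intro i
    have h3 : S.comp Tc = (ContinuousLinearMap.adjoint Tc').comp S := by
      calc S.comp Tc
          = ((ContinuousLinearMap.adjoint Tc').comp (ContinuousLinearMap.adjoint Tc)).comp
              (S.comp Tc) := by rw [hadj1]; ext x; rfl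
        _ = (ContinuousLinearMap.adjoint Tc').comp
              ((ContinuousLinearMap.adjoint Tc).comp (S.comp Tc)) := by
              ext x; rfl
        _ = (ContinuousLinearMap.adjoint Tc').comp S := by rw [eq1]
    have h4 : S'.comp (ContinuousLinearMap.adjoint Tc') = Tc.comp S' := by
      calc S'.comp (ContinuousLinearMap.adjoint Tc')
          = S'.comp ((ContinuousLinearMap.adjoint Tc').comp (S.comp S')) := by
              rw [hSS']; ext x; rfl
        _ = S'.comp (((ContinuousLinearMap.adjoint Tc').comp S).comp S') := by ext x; rfl
        _ = S'.comp ((S.comp Tc).comp S') := by rw [h3]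
        _ = ((S'.comp S).comp Tc).comp S' := by ext x; rfl
        _ = Tc.comp S' := by rw [hS'S]; ext x; rfl
    calc (Λ (i + 1)).comp S'
        = ((Λ i).comp Tc).comp S' := by rw [hrep i]
      _ = (Λ i).comp (Tc.comp S') := by ext x; rfl
      _ = (Λ i).comp (S'.comp (ContinuousLinearMap.adjoint Tc')) := by rw [h4]
      _ = ((Λ i).comp S').comp (ContinuousLinearMap.adjoint Tc') := by ext x; rfl
end

section
/- Let Λ = (Λ_i)_{i∈ℤ} and Θ = (Θ_i)_{i∈ℤ} be dual g-frames for H with respect to K, and suppose Λ is represented by an invertible bounded operator T with bounded inverse (Λ_i = Λ_0 ∘ T^i for all i ∈ ℤ) and Θ is represented by an invertible bounded operator S with bounded inverse (Θ_i = Θ_0 ∘ S^i for all i ∈ ℤ). Then S = (T*)⁻¹. -/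
open ContinuousLinearMap

/-- If `Λ = (Λ_0 ∘ T^i)_{i∈ℤ}` and `Θ = (Θ_0 ∘ S^i)_{i∈ℤ}` are dual g-frames with
`T, S ∈ GL(H)`, then `S = (T*)⁻¹ = (T⁻¹)*`. -/
theorem dual_gframes_Z_representation_relation
    {H K : Type*} [NormedAddCommGroup H] [InnerProductSpace ℂ H] [CompleteSpace H]
    [TopologicalSpace.SeparableSpace H]
    [NormedAddCommGroup K] [InnerProductSpace ℂ K] [CompleteSpace K]
    [TopologicalSpace.SeparableSpace K]
    (Λ Θ : ℤ → (H →L[ℂ] K)) (A B A' B' : ℝ) (hA : 0 < A) (hAB : A ≤ B)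
    (hA' : 0 < A') (hAB' : A' ≤ B')
    (hsumΛ : ∀ f : H, Summable fun i : ℤ => ‖Λ i f‖ ^ 2)
    (hlowΛ : ∀ f : H, A * ‖f‖ ^ 2 ≤ ∑' i : ℤ, ‖Λ i f‖ ^ 2)
    (hupΛ : ∀ f : H, ∑' i : ℤ, ‖Λ i f‖ ^ 2 ≤ B * ‖f‖ ^ 2)
    (hsumΘ : ∀ f : H, Summable fun i : ℤ => ‖Θ i f‖ ^ 2)
    (hlowΘ : ∀ f : H, A' * ‖f‖ ^ 2 ≤ ∑' i : ℤ, ‖Θ i f‖ ^ 2)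
    (hupΘ : ∀ f : H, ∑' i : ℤ, ‖Θ i f‖ ^ 2 ≤ B' * ‖f‖ ^ 2)
    (hdual : ∀ f : H, (∑' i : ℤ, ContinuousLinearMap.adjoint (Λ i) (Θ i f)) = f)
    (T S : H ≃L[ℂ] H)
    (hrepΛ : ∀ i : ℤ, Λ i = (Λ 0).comp ((T ^ i : H ≃L[ℂ] H) : H →L[ℂ] H))
    (hrepΘ : ∀ i : ℤ, Θ i = (Θ 0).comp ((S ^ i : H ≃L[ℂ] H) : H →L[ℂ] H)) :
    (S : H →L[ℂ] H) = ContinuousLinearMap.adjoint (T.symm : H →L[ℂ] H) := by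
  set Tc : H →L[ℂ] H := (T : H →L[ℂ] H)
  set Ts : H →L[ℂ] H := (T.symm : H →L[ℂ] H)
  have hleft : ∀ x : H, adjoint Ts (adjoint Tc x) = x := by
    intro x
    have : (adjoint Ts).comp (adjoint Tc) = ContinuousLinearMap.id ℂ H := by
      rw [← adjoint_comp, ← adjoint_id]
      congr 1
      ext y
      simp [Tc, Ts]
    simpa using congrArg (fun (L : H →L[ℂ] H) => L x) this
  have hright : ∀ x : H, adjoint Tc (adjoint Ts x) = x := by
    intro x
    have : (adjoint Tc).comp (adjoint Ts) = ContinuousLinearMap.id ℂ H := by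
      rw [← adjoint_comp, ← adjoint_id]
      congr 1
      ext y
      simp [Tc, Ts]
    simpa using congrArg (fun (L : H →L[ℂ] H) => L x) this
  -- The adjoint of `Tc` as a continuous linear equivalence
  let E : H ≃L[ℂ] H := ContinuousLinearEquiv.equivOfInverse (adjoint Tc) (adjoint Ts)
    hleft hright
  ext f
  -- key pointwise identity
  have hkey : ∀ i : ℤ, adjoint (Λ (i + 1)) (Θ (i + 1) f)
      = adjoint Tc (adjoint (Λ i) (Θ i (S f))) := by
    intro i
    have hT : ((T ^ (i + 1) : H ≃L[ℂ] H) : H →L[ℂ] H)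
        = (((T ^ i : H ≃L[ℂ] H) : H →L[ℂ] H)).comp Tc := by
      rw [zpow_add_one]; rfl
    have hS : ((S ^ (i + 1) : H ≃L[ℂ] H) : H →L[ℂ] H) f
        = ((S ^ i : H ≃L[ℂ] H) : H →L[ℂ] H) (S f) := by
      rw [zpow_add_one]; rfl
    rw [hrepΛ (i + 1), hrepΘ (i + 1), hrepΛ i, hrepΘ i]
    simp only [adjoint_comp, hT, hS, comp_apply, coe_comp', Function.comp_apply]
  have h1 : adjoint Tc ((S : H →L[ℂ] H) f) = f := by
    have hSf := hdual (S f)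
    calc adjoint Tc ((S : H →L[ℂ] H) f)
        = E (∑' i : ℤ, adjoint (Λ i) (Θ i (S f))) := by
          rw [hSf]; rfl
      _ = ∑' i : ℤ, E (adjoint (Λ i) (Θ i (S f))) := E.map_tsum
      _ = ∑' i : ℤ, adjoint (Λ (i + 1)) (Θ (i + 1) f) := by
          refine tsum_congr fun i => ?_
          rw [hkey i]; rfl
      _ = ∑' i : ℤ, adjoint (Λ i) (Θ i f) := by
          exact (Equiv.addRight (1 : ℤ)).tsum_eq fun i => adjoint (Λ i) (Θ i f)
      _ = f := hdual f
  have := congrArg (adjoint Ts) h1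
  rw [hleft] at this
  simpa [Ts] using this
end

section
/- Let F = (f_i)_{i∈ℤ} be a frame sequence in H (a frame for the closed subspace it spans) whose linear span is infinite-dimensional. Then the following are equivalent: (i) the family (f_i)_{i∈ℤ} is linearly independent; (ii) there is a well-defined linear bijection T : span{f_i : i ∈ ℤ} → span{f_i : i ∈ ℤ} (of the algebraic linear span) with T f_i = f_{i+1} for all i ∈ ℤ. In the affirmative case, f_i = T^i f_0 for all i ∈ ℤ. -/
private lemma mulapp {M : Type*} [AddCommGroup M] [Module ℂ M]
    (e₁ e₂ : M ≃ₗ[ℂ] M) (x : M) : (e₁ * e₂) x = e₁ (e₂ x) := rfl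

/-- For a frame sequence `F = (f_i)_{i∈ℤ}` in `H` spanning an
infinite-dimensional subspace, `F` is linearly independent if and only if `T f_i := f_{i+1}`
is well defined and extends to a linear bijection of the algebraic span; in the affirmative
case `f_i = T^i f_0` for all `i ∈ ℤ`. -/
theorem frame_sequence_Z_linearIndependent_iff_shift_bijection
    {H : Type*} [NormedAddCommGroup H] [InnerProductSpace ℂ H] [CompleteSpace H]
    [TopologicalSpace.SeparableSpace H]
    (f : ℤ → H) (A B : ℝ) (hA : 0 < A) (hAB : A ≤ B)
    (hsum : ∀ g : H, Summable fun i : ℤ => ‖(inner ℂ g (f i) : ℂ)‖ ^ 2)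
    (hframe : ∀ g : H,
      g ∈ (Submodule.span ℂ (Set.range f)).topologicalClosure →
        A * ‖g‖ ^ 2 ≤ ∑' i : ℤ, ‖(inner ℂ g (f i) : ℂ)‖ ^ 2 ∧
        ∑' i : ℤ, ‖(inner ℂ g (f i) : ℂ)‖ ^ 2 ≤ B * ‖g‖ ^ 2)
    (hinf : ¬ FiniteDimensional ℂ (Submodule.span ℂ (Set.range f))) :
    LinearIndependent ℂ f ↔
      ∃ T : (Submodule.span ℂ (Set.range f)) ≃ₗ[ℂ] (Submodule.span ℂ (Set.range f)),
        (∀ i : ℤ, T ⟨f i, Submodule.subset_span (Set.mem_range_self i)⟩ =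
          ⟨f (i + 1), Submodule.subset_span (Set.mem_range_self (i + 1))⟩) ∧
        (∀ i : ℤ, (T ^ i) ⟨f 0, Submodule.subset_span (Set.mem_range_self 0)⟩ =
          ⟨f i, Submodule.subset_span (Set.mem_range_self i)⟩) := by
  have hmem : ∀ i : ℤ, f i ∈ Submodule.span ℂ (Set.range f) :=
    fun i => Submodule.subset_span (Set.mem_range_self i)
  constructor
  · intro hli
    set b := Module.Basis.span hli with hb
    have hbi : ∀ i : ℤ, b i = ⟨f i, hmem i⟩ := by
      intro i; exact Module.Basis.span_apply hli i
    set T := b.equiv b (Equiv.addRight (1 : ℤ)) with hT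
    have hstep : ∀ i : ℤ, T (b i) = b (i + 1) := by
      intro i; rw [hT, b.equiv_apply]; rfl
    have hsymm : ∀ i : ℤ, T.symm (b i) = b (i - 1) := by
      intro i
      apply T.injective
      rw [T.apply_symm_apply, hstep]
      congr 1; ring
    refine ⟨T, ?_, ?_⟩
    · intro i
      rw [← hbi, ← hbi, hstep]
    · have key : ∀ n : ℤ, (T ^ n) (b 0) = b n := by
        intro n
        induction n using Int.induction_on with
        | zero => simp
        | succ k ih =>
          rw [show ((k : ℤ) + 1) = 1 + k by ring, zpow_add, zpow_one, mulapp, ih, hstep]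
          congr 1; ring
        | pred k ih =>
          rw [show (-(k : ℤ) - 1) = -1 + -k by ring, zpow_add, mulapp, ih,
            zpow_neg_one]
          rw [show (T⁻¹ : _ ≃ₗ[ℂ] _) = T.symm from rfl, hsymm]
          congr 1; ring
      intro i
      rw [← hbi, ← hbi]
      exact key i
  · rintro ⟨T, hT1, -⟩
    by_contra hdep
    rw [linearIndependent_iff'] at hdep
    push_neg at hdep
    obtain ⟨s, c, hrel, j₀, hj₀s, hj₀⟩ := hdep
    set s₀ : Finset ℤ := s.filter (fun j => c j ≠ 0) with hs₀
    have hs₀ne : s₀.Nonempty := ⟨j₀, by simp [hs₀, hj₀s, hj₀]⟩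
    have hrel₀ : ∑ j ∈ s₀, c j • f j = 0 := by
      rw [hs₀, Finset.sum_filter_of_ne, hrel]
      intro j _ h hc
      exact h (by rw [hc, zero_smul])
    have hc₀ : ∀ j ∈ s₀, c j ≠ 0 := fun j hj => (Finset.mem_filter.mp hj).2
    set m := s₀.min' hs₀ne with hm
    set M := s₀.max' hs₀ne with hM
    have hmM : m ≤ M := s₀.min'_le _ (s₀.max'_mem hs₀ne)
    have hmem_m : m ∈ s₀ := s₀.min'_mem hs₀ne
    have hmem_M : M ∈ s₀ := s₀.max'_mem hs₀ne
    -- shifting the relation by powers of T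
    have hTsymm : ∀ i : ℤ, T.symm ⟨f i, hmem i⟩ = ⟨f (i - 1), hmem _⟩ := by
      intro i
      apply T.injective
      rw [T.apply_symm_apply, hT1]
      congr 1; ring
    have hTpow : ∀ (n : ℤ) (i : ℤ),
        (T ^ n) ⟨f i, hmem i⟩ = ⟨f (i + n), hmem (i + n)⟩ := by
      intro n
      induction n using Int.induction_on with
      | zero => intro i; simp
      | succ k ih =>
        intro i
        rw [show ((k : ℤ) + 1) = 1 + k by ring, zpow_add, zpow_one, mulapp, ih, hT1]
        congr 1; ring
      | pred k ih =>
        intro i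
        rw [show (-(k : ℤ) - 1) = -1 + -k by ring, zpow_add, mulapp, ih, zpow_neg_one]
        rw [show (T⁻¹ : _ ≃ₗ[ℂ] _) = T.symm from rfl, hTsymm]
        congr 1; ring
    have hshift : ∀ n : ℤ, ∑ j ∈ s₀, c j • f (j + n) = 0 := by
      intro n
      have hsub : ∑ j ∈ s₀, c j • (⟨f j, hmem j⟩ : Submodule.span ℂ (Set.range f)) = 0 := by
        apply Subtype.ext
        push_cast
        simpa using hrel₀
      have h1 := congrArg (T ^ n) hsub
      rw [map_sum] at h1
      simp only [map_smul, hTpow n] at h1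
      have h2 := congrArg (Subtype.val) h1
      push_cast at h2
      simpa using h2
    set S : Submodule ℂ H := Submodule.span ℂ (f '' Set.Icc m M) with hS
    have hbase : ∀ t : ℤ, m ≤ t → t ≤ M → f t ∈ S := by
      intro t h1 h2
      exact Submodule.subset_span ⟨t, ⟨h1, h2⟩, rfl⟩
    -- solve the shifted relation for a given index
    have hsolve : ∀ j₁ ∈ s₀, ∀ n : ℤ,
        f (j₁ + n) = (c j₁)⁻¹ • (-∑ j ∈ s₀.erase j₁, c j • f (j + n)) := by
      intro j₁ hj₁ n
      have h := hshift n
      rw [← Finset.add_sum_erase _ _ hj₁] at h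
      have h2 : c j₁ • f (j₁ + n) = -∑ j ∈ s₀.erase j₁, c j • f (j + n) :=
        eq_neg_of_add_eq_zero_left h
      rw [← h2, smul_smul, inv_mul_cancel₀ (hc₀ j₁ hj₁), one_smul]
    have hup : ∀ k : ℕ, ∀ t : ℤ, m ≤ t → t ≤ M + k → f t ∈ S := by
      intro k
      induction k with
      | zero => intro t h1 h2; exact hbase t h1 (by omega)
      | succ k ih =>
        intro t h1 h2
        rcases le_or_gt t (M + k) with h3 | h3
        · exact ih t h1 h3
        · have ht : t = M + ((k : ℤ) + 1) := by omega
          rw [ht, hsolve M hmem_M ((k : ℤ) + 1)]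
          refine S.smul_mem _ (S.neg_mem (S.sum_mem ?_))
          intro j hj
          have hj1 : j ∈ s₀ := Finset.mem_of_mem_erase hj
          have hjne : j ≠ M := Finset.ne_of_mem_erase hj
          have hjm : m ≤ j := s₀.min'_le _ hj1
          have hjM : j ≤ M := s₀.le_max' _ hj1
          exact S.smul_mem _ (ih (j + ((k : ℤ) + 1)) (by omega) (by omega))
    have hdown : ∀ k : ℕ, ∀ t : ℤ, m - k ≤ t → t ≤ M → f t ∈ S := by
      intro k
      induction k with
      | zero => intro t h1 h2; exact hbase t (by omega) h2
      | succ k ih =>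
        intro t h1 h2
        rcases le_or_gt (m - k) t with h3 | h3
        · exact ih t h3 h2
        · have ht : t = m + (-((k : ℤ) + 1)) := by omega
          rw [ht, hsolve m hmem_m (-((k : ℤ) + 1))]
          refine S.smul_mem _ (S.neg_mem (S.sum_mem ?_))
          intro j hj
          have hj1 : j ∈ s₀ := Finset.mem_of_mem_erase hj
          have hjne : j ≠ m := Finset.ne_of_mem_erase hj
          have hjm : m ≤ j := s₀.min'_le _ hj1
          have hjM : j ≤ M := s₀.le_max' _ hj1
          exact S.smul_mem _ (ih (j + (-((k : ℤ) + 1))) (by omega) (by omega))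
    have hall : ∀ i : ℤ, f i ∈ S := by
      intro i
      rcases le_or_gt i M with h1 | h1
      · rcases le_or_gt m i with h2 | h2
        · exact hbase i h2 h1
        · exact hdown (m - i).toNat i (by omega) h1
      · exact hup (i - M).toNat i (by omega) (by omega)
    have hle : Submodule.span ℂ (Set.range f) ≤ S := by
      rw [Submodule.span_le]
      rintro x ⟨i, rfl⟩
      exact hall i
    have hfinS : FiniteDimensional ℂ S :=
      FiniteDimensional.span_of_finite ℂ ((Set.finite_Icc m M).image f)
    exact hinf (Submodule.finiteDimensional_of_le hle)
end

section
/- Let F = (f_i)_{i∈ℕ} be a frame for H with bounds A, B. Then the following are equivalent: (i) there exists a bounded operator T : H → H with f_{i+1} = T f_i for all i ∈ ℕ (equivalently f_i = T^{i−1} f_1); (ii) the kernel of the synthesis operator is invariant under the right-shift, i.e. for every sequence (c_i)_{i∈ℕ} ∈ ℓ²(ℕ, ℂ) with Σ_{i∈ℕ} c_i f_i = 0 one also has Σ_{i∈ℕ} c_i f_{i+1} = 0. In the affirmative case, T can be chosen with ‖T‖ ≤ √(B/A); moreover, if H is infinite-dimensional then necessarily ‖T‖ ≥ 1. -/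
set_option maxHeartbeats 1000000

section FrameAux

variable {H : Type*} [NormedAddCommGroup H] [InnerProductSpace ℂ H]

open scoped ComplexConjugate


/-- Finite synthesis bound from a Bessel bound. -/
lemma aux_fin_synth (v : ℕ → H) (B : ℝ) (hB : 0 ≤ B)
    (hv : ∀ g : H, ∀ s : Finset ℕ, ∑ i ∈ s, ‖(inner ℂ g (v i) : ℂ)‖ ^ 2 ≤ B * ‖g‖ ^ 2)
    (c : ℕ → ℂ) (s : Finset ℕ) :
    ‖∑ i ∈ s, c i • v i‖ ≤ Real.sqrt B * Real.sqrt (∑ i ∈ s, ‖c i‖ ^ 2) := by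
  set w := ∑ i ∈ s, c i • v i with hw
  rcases eq_or_ne w 0 with h0 | h0
  · rw [h0, norm_zero]
    positivity
  have key : ‖w‖ ^ 2 ≤ Real.sqrt (∑ i ∈ s, ‖c i‖ ^ 2) * Real.sqrt B * ‖w‖ := by
    have h1 : (inner ℂ w w : ℂ) = ∑ i ∈ s, conj (c i) * (inner ℂ (v i) w : ℂ) := by
      rw [hw, sum_inner]
      simp [inner_smul_left, inner_sum, inner_smul_right, Finset.mul_sum, mul_left_comm]
    have h2 : ‖w‖ ^ 2 = ‖(inner ℂ w w : ℂ)‖ := by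
      rw [inner_self_eq_norm_sq_to_K]
      simp [Complex.norm_real]
    rw [h2, h1]
    calc ‖∑ i ∈ s, conj (c i) * (inner ℂ (v i) w : ℂ)‖
        ≤ ∑ i ∈ s, ‖c i‖ * ‖(inner ℂ (v i) w : ℂ)‖ := by
          refine (norm_sum_le _ _).trans ?_
          apply Finset.sum_le_sum
          intro i _
          rw [norm_mul, RCLike.norm_conj]
      _ ≤ Real.sqrt (∑ i ∈ s, ‖c i‖ ^ 2) * Real.sqrt (∑ i ∈ s, ‖(inner ℂ (v i) w : ℂ)‖ ^ 2) := by
          have := Finset.sum_mul_sq_le_sq_mul_sq s (fun i => ‖c i‖) (fun i => ‖(inner ℂ (v i) w : ℂ)‖)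
          have hnn : (0:ℝ) ≤ ∑ i ∈ s, ‖c i‖ * ‖(inner ℂ (v i) w : ℂ)‖ := by positivity
          calc ∑ i ∈ s, ‖c i‖ * ‖(inner ℂ (v i) w : ℂ)‖
              = Real.sqrt ((∑ i ∈ s, ‖c i‖ * ‖(inner ℂ (v i) w : ℂ)‖) ^ 2) := by
                rw [Real.sqrt_sq hnn]
            _ ≤ Real.sqrt ((∑ i ∈ s, ‖c i‖ ^ 2) * (∑ i ∈ s, ‖(inner ℂ (v i) w : ℂ)‖ ^ 2)) := by
                exact Real.sqrt_le_sqrt this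
            _ = _ := by
                rw [Real.sqrt_mul (by positivity)]
      _ ≤ Real.sqrt (∑ i ∈ s, ‖c i‖ ^ 2) * Real.sqrt (B * ‖w‖ ^ 2) := by
          refine mul_le_mul_of_nonneg_left (Real.sqrt_le_sqrt ?_) (Real.sqrt_nonneg _)
          calc ∑ i ∈ s, ‖(inner ℂ (v i) w : ℂ)‖ ^ 2
              = ∑ i ∈ s, ‖(inner ℂ w (v i) : ℂ)‖ ^ 2 := by
                simp_rw [norm_inner_symm]
            _ ≤ B * ‖w‖ ^ 2 := hv w s
      _ = Real.sqrt (∑ i ∈ s, ‖c i‖ ^ 2) * Real.sqrt B * ‖w‖ := by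
          rw [Real.sqrt_mul hB, Real.sqrt_sq (norm_nonneg _), mul_assoc]
  have hwpos : 0 < ‖w‖ := norm_pos_iff.mpr h0
  rw [sq] at key
  have := le_of_mul_le_mul_right key hwpos
  linarith [this]


lemma aux_summable [CompleteSpace H] (v : ℕ → H) (B : ℝ) (hB : 0 ≤ B)
    (hv : ∀ g : H, ∀ s : Finset ℕ, ∑ i ∈ s, ‖(inner ℂ g (v i) : ℂ)‖ ^ 2 ≤ B * ‖g‖ ^ 2)
    (c : ℕ → ℂ) (hc : Summable fun i : ℕ => ‖c i‖ ^ 2) :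
    Summable fun i : ℕ => c i • v i := by
  rw [summable_iff_vanishing_norm]
  intro ε hε
  have hδ : 0 < (ε / (Real.sqrt B + 1)) ^ 2 := by positivity
  obtain ⟨s, hs⟩ := summable_iff_vanishing_norm.mp hc _ hδ
  refine ⟨s, fun t ht => ?_⟩
  have h1 : ∑ i ∈ t, ‖c i‖ ^ 2 < (ε / (Real.sqrt B + 1)) ^ 2 := by
    have := hs t ht
    have hnn : (0:ℝ) ≤ ∑ i ∈ t, ‖c i‖ ^ 2 := by positivity
    rwa [Real.norm_of_nonneg hnn] at this
  calc ‖∑ i ∈ t, c i • v i‖ ≤ Real.sqrt B * Real.sqrt (∑ i ∈ t, ‖c i‖ ^ 2) :=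
        aux_fin_synth v B hB hv c t
    _ ≤ (Real.sqrt B + 1) * Real.sqrt (∑ i ∈ t, ‖c i‖ ^ 2) := by
        refine mul_le_mul_of_nonneg_right (by linarith [Real.sqrt_nonneg B]) (Real.sqrt_nonneg _)
    _ < (Real.sqrt B + 1) * (ε / (Real.sqrt B + 1)) := by
        refine mul_lt_mul_of_pos_left ?_ (by positivity)
        calc Real.sqrt (∑ i ∈ t, ‖c i‖ ^ 2) < Real.sqrt ((ε / (Real.sqrt B + 1)) ^ 2) :=
              Real.sqrt_lt_sqrt (by positivity) h1
          _ = ε / (Real.sqrt B + 1) := Real.sqrt_sq (by positivity)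
    _ = ε := by field_simp

lemma aux_tsum_bound [CompleteSpace H] (v : ℕ → H) (B : ℝ) (hB : 0 ≤ B)
    (hv : ∀ g : H, ∀ s : Finset ℕ, ∑ i ∈ s, ‖(inner ℂ g (v i) : ℂ)‖ ^ 2 ≤ B * ‖g‖ ^ 2)
    (c : ℕ → ℂ) (hc : Summable fun i : ℕ => ‖c i‖ ^ 2) :
    ‖∑' i : ℕ, c i • v i‖ ≤ Real.sqrt B * Real.sqrt (∑' i : ℕ, ‖c i‖ ^ 2) := by
  have hsummable := aux_summable v B hB hv c hc
  have hhs := hsummable.hasSum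
  refine le_of_tendsto hhs.norm (Filter.Eventually.of_forall fun s => ?_)
  calc ‖∑ i ∈ s, c i • v i‖ ≤ Real.sqrt B * Real.sqrt (∑ i ∈ s, ‖c i‖ ^ 2) :=
        aux_fin_synth v B hB hv c s
    _ ≤ Real.sqrt B * Real.sqrt (∑' i : ℕ, ‖c i‖ ^ 2) := by
        refine mul_le_mul_of_nonneg_left (Real.sqrt_le_sqrt ?_) (Real.sqrt_nonneg _)
        exact Summable.sum_le_tsum s (fun i _ => by positivity) hc


lemma aux_main [CompleteSpace H]
    (f : ℕ → H) (A B : ℝ) (hA : 0 < A) (hAB : A ≤ B)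
    (hsum : ∀ g : H, Summable fun i : ℕ => ‖(inner ℂ g (f i) : ℂ)‖ ^ 2)
    (hlow : ∀ g : H, A * ‖g‖ ^ 2 ≤ ∑' i : ℕ, ‖(inner ℂ g (f i) : ℂ)‖ ^ 2)
    (hup : ∀ g : H, ∑' i : ℕ, ‖(inner ℂ g (f i) : ℂ)‖ ^ 2 ≤ B * ‖g‖ ^ 2)
    (hker : ∀ c : ℕ → ℂ, Summable (fun i : ℕ => ‖c i‖ ^ 2) →
        (∑' i : ℕ, c i • f i) = 0 → (∑' i : ℕ, c i • f (i + 1)) = 0) :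
    ∃ T : H →L[ℂ] H, (∀ i : ℕ, f (i + 1) = T (f i)) ∧ ‖T‖ ≤ Real.sqrt (B / A) := by
  have hB : (0:ℝ) < B := lt_of_lt_of_le hA hAB
  have hB0 : (0:ℝ) ≤ B := hB.le
  -- Bessel bounds on finite sets, for `f` and the shifted sequence
  have hbf : ∀ g : H, ∀ s : Finset ℕ, ∑ i ∈ s, ‖(inner ℂ g (f i) : ℂ)‖ ^ 2 ≤ B * ‖g‖ ^ 2 := by
    intro g s
    exact (Summable.sum_le_tsum s (fun i _ => by positivity) (hsum g)).trans (hup g)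
  have hbs : ∀ g : H, ∀ s : Finset ℕ,
      ∑ i ∈ s, ‖(inner ℂ g (f (i + 1)) : ℂ)‖ ^ 2 ≤ B * ‖g‖ ^ 2 := by
    intro g s
    have hinj : Function.Injective (fun i : ℕ => i + 1) := fun a b h => by simpa using h
    have h1 : ∑ i ∈ s, ‖(inner ℂ g (f (i + 1)) : ℂ)‖ ^ 2
        = ∑ j ∈ s.image (fun i => i + 1), ‖(inner ℂ g (f j) : ℂ)‖ ^ 2 := by
      rw [Finset.sum_image (fun a _ b _ h => hinj h)]
    rw [h1]
    exact (Summable.sum_le_tsum _ (fun i _ => by positivity) (hsum g)).trans (hup g)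
  -- coefficient summability
  have hcoef : ∀ g : H, Summable fun i : ℕ => ‖(inner ℂ (f i) g : ℂ)‖ ^ 2 := by
    intro g
    have := hsum g
    simpa only [norm_inner_symm] using this
  -- the frame operator
  obtain ⟨S, hSdef⟩ : ∃ S : H →L[ℂ] H, ∀ g : H, S g = ∑' i : ℕ, (inner ℂ (f i) g : ℂ) • f i := by
    refine ⟨LinearMap.mkContinuous
      { toFun := fun g => ∑' i : ℕ, (inner ℂ (f i) g : ℂ) • f i
        map_add' := ?_
        map_smul' := ?_ } B ?_, fun g => rfl⟩
    · intro g h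
      rw [← Summable.tsum_add (aux_summable f B hB0 hbf _ (hcoef g)) (aux_summable f B hB0 hbf _ (hcoef h))]
      congr 1
      funext i
      rw [inner_add_right, add_smul]
    · intro a g
      simp only [RingHom.id_apply]
      have h1 : (fun i : ℕ => (inner ℂ (f i) (a • g) : ℂ) • f i)
          = fun i : ℕ => a • ((inner ℂ (f i) g : ℂ) • f i) := by
        funext i
        rw [inner_smul_right, smul_smul]
      rw [h1, Summable.tsum_const_smul _ (aux_summable f B hB0 hbf _ (hcoef g))]
    · intro g
      calc ‖∑' i : ℕ, (inner ℂ (f i) g : ℂ) • f i‖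
          ≤ Real.sqrt B * Real.sqrt (∑' i : ℕ, ‖(inner ℂ (f i) g : ℂ)‖ ^ 2) :=
            aux_tsum_bound f B hB0 hbf _ (hcoef g)
        _ ≤ Real.sqrt B * Real.sqrt (B * ‖g‖ ^ 2) := by
            refine mul_le_mul_of_nonneg_left (Real.sqrt_le_sqrt ?_) (Real.sqrt_nonneg _)
            calc ∑' i : ℕ, ‖(inner ℂ (f i) g : ℂ)‖ ^ 2
                = ∑' i : ℕ, ‖(inner ℂ g (f i) : ℂ)‖ ^ 2 := by
                  congr 1; funext i; rw [norm_inner_symm]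
              _ ≤ B * ‖g‖ ^ 2 := hup g
        _ = B * ‖g‖ := by
            rw [Real.sqrt_mul hB0, Real.sqrt_sq (norm_nonneg g), ← mul_assoc,
              Real.mul_self_sqrt hB0]
  -- key identity for the inner ℂ product with S g
  have hinner : ∀ g : H, (inner ℂ g (S g) : ℂ) = ((∑' i : ℕ, ‖(inner ℂ g (f i) : ℂ)‖ ^ 2 : ℝ) : ℂ) := by
    intro g
    rw [hSdef g]
    have hsummm := aux_summable f B hB0 hbf _ (hcoef g)
    have hmap : (inner ℂ g (∑' i : ℕ, (inner ℂ (f i) g : ℂ) • f i) : ℂ)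
        = ∑' i : ℕ, (innerSL ℂ g) ((inner ℂ (f i) g : ℂ) • f i) :=
      (innerSL ℂ g).map_tsum hsummm
    rw [hmap]
    have h1 : (fun i : ℕ => (innerSL ℂ g) ((inner ℂ (f i) g : ℂ) • f i))
        = fun i : ℕ => ((‖(inner ℂ g (f i) : ℂ)‖ ^ 2 : ℝ) : ℂ) := by
      funext i
      simp only [innerSL_apply_apply, inner_smul_right]
      rw [← inner_conj_symm g (f i), RCLike.mul_conj, RCLike.norm_conj]
      norm_cast
    rw [h1, Complex.ofReal_tsum]
  have hre : ∀ g : H, A * ‖g‖ ^ 2 ≤ (inner ℂ g (S g) : ℂ).re := by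
    intro g
    rw [hinner g, Complex.ofReal_re]
    exact hlow g
  have hanti : ∀ g : H, A * ‖g‖ ≤ ‖S g‖ := by
    intro g
    rcases eq_or_ne g 0 with h0 | h0
    · simp [h0]
    have hgpos : 0 < ‖g‖ := norm_pos_iff.mpr h0
    have h1 : A * ‖g‖ ^ 2 ≤ ‖(inner ℂ g (S g) : ℂ)‖ :=
      (hre g).trans ((Complex.re_le_norm _).trans le_rfl)
    have h2 : ‖(inner ℂ g (S g) : ℂ)‖ ≤ ‖g‖ * ‖S g‖ := norm_inner_le_norm g (S g)
    have := h1.trans h2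
    rw [sq] at this
    nlinarith
  -- S is injective
  have hinj : S.ker = ⊥ := by
    rw [LinearMap.ker_eq_bot']
    intro g hg
    have := hanti g
    rw [show S g = 0 from hg, norm_zero] at this
    have : ‖g‖ ≤ 0 := by nlinarith
    exact norm_le_zero_iff.mp this
  -- S has closed range
  have hantiLip : AntilipschitzWith (⟨A, hA.le⟩ : NNReal)⁻¹ S := by
    refine ContinuousLinearMap.antilipschitz_of_bound S fun x => ?_
    show ‖x‖ ≤ A⁻¹ * ‖S x‖
    rw [← div_eq_inv_mul, le_div_iff₀ hA]
    linarith [hanti x]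
  have hclosed : IsClosed (Set.range S) :=
    hantiLip.isClosed_range S.uniformContinuous
  haveI : CompleteSpace (S.range) := by
    have h : IsClosed ((S.range : Submodule ℂ H) : Set H) := by
      have : ((S.range : Submodule ℂ H) : Set H) = Set.range S := by
        ext x
        simp [LinearMap.mem_range]
      rw [this]; exact hclosed
    exact h.completeSpace_coe
  have horth : (S.range)ᗮ = ⊥ := by
    rw [Submodule.eq_bot_iff]
    intro h hh
    have h0 : (inner ℂ (S h) h : ℂ) = 0 :=
      (Submodule.mem_orthogonal _ _).mp hh (S h) ⟨h, rfl⟩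
    have h1 : (inner ℂ h (S h) : ℂ) = 0 := by
      rw [← inner_conj_symm, h0, map_zero]
    have h2 := hre h
    rw [h1] at h2
    simp only [Complex.zero_re] at h2
    have : ‖h‖ ^ 2 ≤ 0 := by nlinarith
    have : ‖h‖ = 0 := by nlinarith [norm_nonneg h, sq_nonneg ‖h‖]
    exact norm_eq_zero.mp this
  have hrange : S.range = ⊤ := Submodule.orthogonal_eq_bot_iff.mp horth
  -- the inverse of S
  obtain ⟨R, hR⟩ : ∃ R : H →L[ℂ] H, ∀ g : H, S (R g) = g := by
    refine ⟨(ContinuousLinearEquiv.ofBijective S hinj hrange).symm.toContinuousLinearMap,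
      fun g => ?_⟩
    exact (ContinuousLinearEquiv.ofBijective S hinj hrange).apply_symm_apply g
  have hRnorm : ∀ g : H, A * ‖R g‖ ≤ ‖g‖ := by
    intro g
    have := hanti (R g)
    rwa [hR g] at this
  have hRcoefsum : ∀ g : H, Summable fun i : ℕ => ‖(inner ℂ (f i) (R g) : ℂ)‖ ^ 2 :=
    fun g => hcoef (R g)
  have hRcoef : ∀ g : H, ∑' i : ℕ, ‖(inner ℂ (f i) (R g) : ℂ)‖ ^ 2 ≤ A⁻¹ * ‖g‖ ^ 2 := by
    intro g
    have h2 : ∑' i : ℕ, ‖(inner ℂ (f i) (R g) : ℂ)‖ ^ 2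
        = ∑' i : ℕ, ‖(inner ℂ (R g) (f i) : ℂ)‖ ^ 2 := by
      congr 1; funext i; rw [norm_inner_symm]
    have h1 : ((∑' i : ℕ, ‖(inner ℂ (R g) (f i) : ℂ)‖ ^ 2 : ℝ) : ℂ) = inner ℂ (R g) g := by
      rw [← hinner (R g), hR g]
    have h3 : ∑' i : ℕ, ‖(inner ℂ (R g) (f i) : ℂ)‖ ^ 2 = (inner ℂ (R g) g : ℂ).re := by
      rw [← h1, Complex.ofReal_re]
    rw [h2, h3]
    calc (inner ℂ (R g) g : ℂ).re ≤ ‖(inner ℂ (R g) g : ℂ)‖ :=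
          (Complex.re_le_norm _).trans le_rfl
      _ ≤ ‖R g‖ * ‖g‖ := norm_inner_le_norm _ _
      _ ≤ (A⁻¹ * ‖g‖) * ‖g‖ := by
          refine mul_le_mul_of_nonneg_right ?_ (norm_nonneg g)
          rw [← div_eq_inv_mul, le_div_iff₀ hA, mul_comm]
          exact hRnorm g
      _ = A⁻¹ * ‖g‖ ^ 2 := by ring
  -- the operator T
  obtain ⟨T, hTdef, hTnorm⟩ : ∃ T : H →L[ℂ] H,
      (∀ g : H, T g = ∑' i : ℕ, (inner ℂ (f i) (R g) : ℂ) • f (i + 1)) ∧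
        ‖T‖ ≤ Real.sqrt (B / A) := by
    refine ⟨LinearMap.mkContinuous
      { toFun := fun g => ∑' i : ℕ, (inner ℂ (f i) (R g) : ℂ) • f (i + 1)
        map_add' := ?_
        map_smul' := ?_ } (Real.sqrt (B / A)) ?_, fun g => rfl,
      LinearMap.mkContinuous_norm_le _ (Real.sqrt_nonneg _) _⟩
    · intro g h
      rw [map_add,
        ← Summable.tsum_add (aux_summable (fun i => f (i + 1)) B hB0 hbs _ (hRcoefsum g))
          (aux_summable (fun i => f (i + 1)) B hB0 hbs _ (hRcoefsum h))]
      congr 1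
      funext i
      rw [inner_add_right, add_smul]
    · intro a g
      simp only [RingHom.id_apply]
      rw [map_smul]
      have h1 : (fun i : ℕ => (inner ℂ (f i) (a • R g) : ℂ) • f (i + 1))
          = fun i : ℕ => a • ((inner ℂ (f i) (R g) : ℂ) • f (i + 1)) := by
        funext i
        rw [inner_smul_right, smul_smul]
      rw [h1, Summable.tsum_const_smul _ (aux_summable (fun i => f (i + 1)) B hB0 hbs _ (hRcoefsum g))]
    · intro g
      calc ‖∑' i : ℕ, (inner ℂ (f i) (R g) : ℂ) • f (i + 1)‖
          ≤ Real.sqrt B * Real.sqrt (∑' i : ℕ, ‖(inner ℂ (f i) (R g) : ℂ)‖ ^ 2) :=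
            aux_tsum_bound (fun i => f (i + 1)) B hB0 hbs _ (hRcoefsum g)
        _ ≤ Real.sqrt B * Real.sqrt (A⁻¹ * ‖g‖ ^ 2) :=
            mul_le_mul_of_nonneg_left (Real.sqrt_le_sqrt (hRcoef g)) (Real.sqrt_nonneg _)
        _ = Real.sqrt (B / A) * ‖g‖ := by
            rw [Real.sqrt_mul (by positivity), Real.sqrt_sq (norm_nonneg g), ← mul_assoc,
              ← Real.sqrt_mul hB0, ← div_eq_mul_inv]
  refine ⟨T, fun i => ?_, hTnorm⟩
  -- use the kernel invariance
  set d : ℕ → ℂ := fun j => (inner ℂ (f j) (R (f i)) : ℂ) with hd_def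
  set e : ℕ → ℂ := fun j => if j = i then 1 else 0 with he_def
  have hd : Summable fun j : ℕ => ‖d j‖ ^ 2 := hRcoefsum (f i)
  have hesum : Summable fun j : ℕ => ‖e j‖ ^ 2 := by
    refine summable_of_ne_finset_zero (s := {i}) fun j hj => ?_
    simp only [Finset.mem_singleton] at hj
    simp [he_def, hj]
  have hc : Summable fun j : ℕ => ‖d j - e j‖ ^ 2 := by
    refine Summable.of_nonneg_of_le (fun j => by positivity) (fun j => ?_)
      ((hd.mul_left 2).add (hesum.mul_left 2))
    have h1 := norm_sub_le (d j) (e j)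
    have h2 : ‖d j - e j‖ ^ 2 ≤ (‖d j‖ + ‖e j‖) ^ 2 :=
      pow_le_pow_left₀ (norm_nonneg _) h1 2
    nlinarith [h2, sq_nonneg (‖d j‖ - ‖e j‖)]
  have hde : Summable fun j : ℕ => d j • f j := aux_summable f B hB0 hbf _ hd
  have hee : Summable fun j : ℕ => e j • f j := by
    refine summable_of_ne_finset_zero (s := {i}) fun j hj => ?_
    simp only [Finset.mem_singleton] at hj
    simp [he_def, hj]
  have hes : (∑' j : ℕ, e j • f j) = f i := by
    rw [tsum_eq_single i (fun b hb => by simp [he_def, hb])]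
    simp [he_def]
  have hsum0 : (∑' j : ℕ, (d j - e j) • f j) = 0 := by
    have h1 : (fun j : ℕ => (d j - e j) • f j) = fun j => d j • f j - e j • f j := by
      funext j; rw [sub_smul]
    rw [h1, Summable.tsum_sub hde hee, hes]
    have h2 : (∑' j : ℕ, d j • f j) = S (R (f i)) := (hSdef _).symm
    rw [h2, hR]
    simp
  have h2 := hker _ hc hsum0
  have hde' : Summable fun j : ℕ => d j • f (j + 1) :=
    aux_summable (fun j => f (j + 1)) B hB0 hbs _ hd
  have hee' : Summable fun j : ℕ => e j • f (j + 1) := by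
    refine summable_of_ne_finset_zero (s := {i}) fun j hj => ?_
    simp only [Finset.mem_singleton] at hj
    simp [he_def, hj]
  have hes' : (∑' j : ℕ, e j • f (j + 1)) = f (i + 1) := by
    rw [tsum_eq_single i (fun b hb => by simp [he_def, hb])]
    simp [he_def]
  have h3 : (fun j : ℕ => (d j - e j) • f (j + 1))
      = fun j => d j • f (j + 1) - e j • f (j + 1) := by
    funext j; rw [sub_smul]
  rw [h3, Summable.tsum_sub hde' hee', hes'] at h2
  have h4 : (∑' j : ℕ, d j • f (j + 1)) = T (f i) := (hTdef _).symm
  rw [h4, sub_eq_zero] at h2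
  exact h2.symm

end FrameAux

/-- For a frame `F = (f_i)_{i∈ℕ}` for `H` with bounds `A, B`, the existence of a
bounded operator `T` with `f_{i+1} = T f_i` is equivalent to the right-shift invariance of the
kernel of the synthesis operator; in the affirmative case `T` can be chosen with
`‖T‖ ≤ √(B/A)`, and if `H` is infinite-dimensional then any such `T` has `‖T‖ ≥ 1`. -/
theorem frame_N_representation_iff_ker_shift_invariant
    {H : Type*} [NormedAddCommGroup H] [InnerProductSpace ℂ H] [CompleteSpace H]
    [TopologicalSpace.SeparableSpace H]
    (f : ℕ → H) (A B : ℝ) (hA : 0 < A) (hAB : A ≤ B)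
    (hsum : ∀ g : H, Summable fun i : ℕ => ‖(inner ℂ g (f i) : ℂ)‖ ^ 2)
    (hlow : ∀ g : H, A * ‖g‖ ^ 2 ≤ ∑' i : ℕ, ‖(inner ℂ g (f i) : ℂ)‖ ^ 2)
    (hup : ∀ g : H, ∑' i : ℕ, ‖(inner ℂ g (f i) : ℂ)‖ ^ 2 ≤ B * ‖g‖ ^ 2) :
    ((∃ T : H →L[ℂ] H, ∀ i : ℕ, f (i + 1) = T (f i)) ↔
      (∀ c : ℕ → ℂ, Summable (fun i : ℕ => ‖c i‖ ^ 2) →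
        (∑' i : ℕ, c i • f i) = 0 → (∑' i : ℕ, c i • f (i + 1)) = 0)) ∧
    ((∃ T : H →L[ℂ] H, ∀ i : ℕ, f (i + 1) = T (f i)) →
      ∃ T : H →L[ℂ] H, (∀ i : ℕ, f (i + 1) = T (f i)) ∧ ‖T‖ ≤ Real.sqrt (B / A)) ∧
    (¬ FiniteDimensional ℂ H →
      ∀ T : H →L[ℂ] H, (∀ i : ℕ, f (i + 1) = T (f i)) → 1 ≤ ‖T‖) := by
  have hB0 : (0:ℝ) ≤ B := le_trans hA.le hAB
  have hbf : ∀ g : H, ∀ s : Finset ℕ, ∑ i ∈ s, ‖(inner ℂ g (f i) : ℂ)‖ ^ 2 ≤ B * ‖g‖ ^ 2 :=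
    fun g s => (Summable.sum_le_tsum s (fun i _ => by positivity) (hsum g)).trans (hup g)
  have forward : (∃ T : H →L[ℂ] H, ∀ i : ℕ, f (i + 1) = T (f i)) →
      (∀ c : ℕ → ℂ, Summable (fun i : ℕ => ‖c i‖ ^ 2) →
        (∑' i : ℕ, c i • f i) = 0 → (∑' i : ℕ, c i • f (i + 1)) = 0) := by
    rintro ⟨T, hT⟩ c hc h0
    have hs := aux_summable f B hB0 hbf c hc
    have h1 : (fun i : ℕ => c i • f (i + 1)) = fun i : ℕ => T (c i • f i) := by
      funext i
      rw [hT i, map_smul]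
    rw [h1, ← T.map_tsum hs, h0, map_zero]
  refine ⟨⟨forward, fun hker => ?_⟩, fun hT => ?_, ?_⟩
  · obtain ⟨T, hT, _⟩ := aux_main f A B hA hAB hsum hlow hup hker
    exact ⟨T, hT⟩
  · exact aux_main f A B hA hAB hsum hlow hup (forward hT)
  · intro hfin T hT
    by_contra hlt
    push_neg at hlt
    set r := ‖T‖ with hr
    have hr0 : 0 ≤ r := norm_nonneg T
    have hfi : ∀ i : ℕ, ‖f i‖ ^ 2 ≤ (r ^ 2) ^ i * ‖f 0‖ ^ 2 := by
      intro i
      induction i with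
      | zero => simp
      | succ k ih =>
        have h1 : ‖f (k + 1)‖ ≤ r * ‖f k‖ := by rw [hT k]; exact T.le_opNorm _
        have h2 : ‖f (k + 1)‖ ^ 2 ≤ r ^ 2 * ‖f k‖ ^ 2 := by
          nlinarith [norm_nonneg (f k), norm_nonneg (f (k + 1))]
        calc ‖f (k + 1)‖ ^ 2 ≤ r ^ 2 * ‖f k‖ ^ 2 := h2
          _ ≤ r ^ 2 * ((r ^ 2) ^ k * ‖f 0‖ ^ 2) :=
            mul_le_mul_of_nonneg_left ih (by positivity)
          _ = (r ^ 2) ^ (k + 1) * ‖f 0‖ ^ 2 := by ring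
    have hrr : r ^ 2 < 1 := by nlinarith
    have hrr0 : 0 ≤ r ^ 2 := sq_nonneg r
    have htend := tendsto_pow_atTop_nhds_zero_of_lt_one hrr0 hrr
    have h1mr : 0 < 1 - r ^ 2 := by linarith
    have hpos : 0 < A * (1 - r ^ 2) / (‖f 0‖ ^ 2 + 1) :=
      div_pos (mul_pos hA h1mr) (by positivity)
    obtain ⟨n, hn⟩ := (htend.eventually (gt_mem_nhds hpos)).exists
    set K := Submodule.span ℂ (f '' Set.Iio n) with hK
    haveI : FiniteDimensional ℂ K :=
      FiniteDimensional.span_of_finite ℂ ((Set.finite_Iio n).image f)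
    obtain ⟨g, hgK, hg0⟩ : ∃ g : H, g ∈ Kᗮ ∧ g ≠ 0 := by
      by_contra hcon
      push_neg at hcon
      have hbot : Kᗮ = ⊥ := by
        rw [Submodule.eq_bot_iff]
        intro x hx
        exact hcon x hx
      have htop : K = ⊤ := Submodule.orthogonal_eq_bot_iff.mp hbot
      have hfd : FiniteDimensional ℂ (⊤ : Submodule ℂ H) := htop ▸ ‹FiniteDimensional ℂ K›
      exact hfin (Module.Finite.equiv (Submodule.topEquiv (R := ℂ) (M := H)))
    have hgpos : 0 < ‖g‖ ^ 2 := by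
      have : 0 < ‖g‖ := norm_pos_iff.mpr hg0
      positivity
    have horthi : ∀ i : ℕ, i < n → (inner ℂ g (f i) : ℂ) = 0 := by
      intro i hi
      have hfK : f i ∈ K := Submodule.subset_span ⟨i, hi, rfl⟩
      have h0 := (Submodule.mem_orthogonal K g).mp hgK (f i) hfK
      rw [← inner_conj_symm, h0, map_zero]
    have hsummg := hsum g
    have htail := Summable.sum_add_tsum_nat_add (f := fun i : ℕ => ‖(inner ℂ g (f i) : ℂ)‖ ^ 2) n hsummg
    have hzero : ∑ i ∈ Finset.range n, ‖(inner ℂ g (f i) : ℂ)‖ ^ 2 = 0 :=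
      Finset.sum_eq_zero fun i hi => by rw [horthi i (Finset.mem_range.mp hi)]; simp
    have hmaj : ∀ i : ℕ, ‖(inner ℂ g (f (i + n)) : ℂ)‖ ^ 2
        ≤ (‖g‖ ^ 2 * ‖f 0‖ ^ 2 * (r ^ 2) ^ n) * (r ^ 2) ^ i := by
      intro i
      have h1 : ‖(inner ℂ g (f (i + n)) : ℂ)‖ ≤ ‖g‖ * ‖f (i + n)‖ := norm_inner_le_norm _ _
      have h2 : ‖(inner ℂ g (f (i + n)) : ℂ)‖ ^ 2 ≤ ‖g‖ ^ 2 * ‖f (i + n)‖ ^ 2 := by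
        nlinarith [norm_nonneg (inner ℂ g (f (i + n)) : ℂ), norm_nonneg g, norm_nonneg (f (i + n))]
      have h3 := hfi (i + n)
      calc ‖(inner ℂ g (f (i + n)) : ℂ)‖ ^ 2 ≤ ‖g‖ ^ 2 * ‖f (i + n)‖ ^ 2 := h2
        _ ≤ ‖g‖ ^ 2 * ((r ^ 2) ^ (i + n) * ‖f 0‖ ^ 2) :=
          mul_le_mul_of_nonneg_left h3 (by positivity)
        _ = (‖g‖ ^ 2 * ‖f 0‖ ^ 2 * (r ^ 2) ^ n) * (r ^ 2) ^ i := by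
          rw [pow_add]; ring
    have hmaj_sum : Summable fun i : ℕ => (‖g‖ ^ 2 * ‖f 0‖ ^ 2 * (r ^ 2) ^ n) * (r ^ 2) ^ i :=
      (summable_geometric_of_lt_one hrr0 hrr).mul_left _
    have htailsum : Summable fun i : ℕ => ‖(inner ℂ g (f (i + n)) : ℂ)‖ ^ 2 :=
      (summable_nat_add_iff n).mpr hsummg
    have hle := Summable.tsum_le_tsum hmaj htailsum hmaj_sum
    have hgeo : ∑' i : ℕ, (‖g‖ ^ 2 * ‖f 0‖ ^ 2 * (r ^ 2) ^ n) * (r ^ 2) ^ i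
        = (‖g‖ ^ 2 * ‖f 0‖ ^ 2 * (r ^ 2) ^ n) * (1 - r ^ 2)⁻¹ := by
      rw [tsum_mul_left, tsum_geometric_of_lt_one hrr0 hrr]
    have hfinal : A * ‖g‖ ^ 2 ≤ (‖g‖ ^ 2 * ‖f 0‖ ^ 2 * (r ^ 2) ^ n) * (1 - r ^ 2)⁻¹ := by
      have hlg := hlow g
      rw [← htail, hzero, zero_add] at hlg
      rw [← hgeo]
      exact hlg.trans hle
    have hfinal' : A * ‖g‖ ^ 2 * (1 - r ^ 2) ≤ ‖g‖ ^ 2 * ‖f 0‖ ^ 2 * (r ^ 2) ^ n := by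
      have h := mul_le_mul_of_nonneg_right hfinal h1mr.le
      have e : ‖g‖ ^ 2 * ‖f 0‖ ^ 2 * (r ^ 2) ^ n * (1 - r ^ 2)⁻¹ * (1 - r ^ 2)
          = ‖g‖ ^ 2 * ‖f 0‖ ^ 2 * (r ^ 2) ^ n := by
        field_simp
      rw [e] at h
      linarith [h]
    have hfact : (r ^ 2) ^ n * (‖f 0‖ ^ 2 + 1) < A * (1 - r ^ 2) :=
      (lt_div_iff₀ (by positivity)).mp hn
    nlinarith [mul_lt_mul_of_pos_left hfact hgpos, pow_nonneg hrr0 n, hgpos, hfinal']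
end
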